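/- arXiv:2007.02257 — 9 statements merged into one kernel-verified Lean document; each statement's English description precedes it below -/
import Mathlib

section
/- Let G be a group, N a normal subgroup, and f : N → ℝ a G-quasi-invariant quasimorphism with defect D(f) and invariance constant D'(f). Then there exists a function f' : G → ℝ extending f (i.e., f'|_N = f) which is an N-quasimorphism with defect D''(f') ≤ D(f) + D'(f). -/
/-- A `G`-quasi-invariant quasimorphism on a normal subgroup `N` of `G` extends to an
`N`-quasimorphism on `G` with defect at most `D + D'`. -/
theorem extension_to_N_quasimorphism {G : Type*} [Group G] (N : Subgroup G) (hN : N.Normal)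
    (f : N → ℝ) (D D' : ℝ)
    (hD : ∀ x y : N, |f (x * y) - f x - f y| ≤ D)
    (hD' : ∀ (g : G) (x : N), |f ⟨g * x * g⁻¹, hN.conj_mem x x.2 g⟩ - f x| ≤ D') :
    ∃ f' : G → ℝ, (∀ x : N, f' x = f x) ∧
      ∀ (g x : G), x ∈ N →
        |f' (g * x) - f' g - f' x| ≤ D + D' ∧ |f' (x * g) - f' x - f' g| ≤ D + D' := by
  classical
  have hD'nonneg : 0 ≤ D' := by
    have := hD' 1 1
    have h1 : (⟨(1:G) * ((1:N):G) * (1:G)⁻¹, hN.conj_mem 1 (1:N).2 1⟩ : N) = 1 := by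
      ext; simp
    rw [h1] at this
    simpa using le_trans (abs_nonneg _) this
  -- representative of each coset, with representative 1 for N itself
  set q : G → G ⧸ N := QuotientGroup.mk with hq
  let rep : G → G := fun g => if q g = 1 then 1 else (q g).out
  have hrep : ∀ g, q (rep g) = q g := by
    intro g
    show q (if q g = 1 then 1 else (q g).out) = q g
    by_cases h : q g = 1
    · rw [if_pos h, h]; rfl
    · rw [if_neg h]; exact QuotientGroup.out_eq' (q g)
  have hmem : ∀ g, (rep g)⁻¹ * g ∈ N := by
    intro g
    rw [← QuotientGroup.eq]
    exact hrep g
  set f' : G → ℝ := fun g => f ⟨(rep g)⁻¹ * g, hmem g⟩ with hf'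
  have hrepN : ∀ x : G, x ∈ N → rep x = 1 := by
    intro x hx
    have : q x = 1 := (QuotientGroup.eq_one_iff x).2 hx
    simp [rep, this]
  have hext : ∀ x : N, f' x = f x := by
    intro x
    have h1 : rep (x : G) = 1 := hrepN x x.2
    have : (⟨(rep (x:G))⁻¹ * x, hmem x⟩ : N) = x := by
      ext; simp [h1]
    simp only [hf', this]
  have hconst : ∀ (g x : G), x ∈ N → rep (g * x) = rep g ∧ rep (x * g) = rep g := by
    intro g x hx
    have h1 : q (g * x) = q g := by
      rw [hq]; rw [QuotientGroup.eq]; simpa using hx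
    have h2 : q (x * g) = q g := by
      rw [hq]; rw [QuotientGroup.eq]
      have : (x * g)⁻¹ * g = g⁻¹ * x⁻¹ * g := by group
      rw [this]
      have := hN.conj_mem x⁻¹ (N.inv_mem hx) g⁻¹
      simpa [mul_assoc] using this
    constructor <;> simp [rep, h1, h2]
  refine ⟨f', hext, fun g x hx => ?_⟩
  set r : G := rep g with hr
  set n : N := ⟨r⁻¹ * g, hmem g⟩ with hn
  have hxN : (⟨x, hx⟩ : N) = (⟨x, hx⟩ : N) := rfl
  constructor
  · -- |f' (g*x) - f' g - f' x|
    have e1 : f' (g * x) = f (n * ⟨x, hx⟩) := by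
      have hrw : rep (g * x) = r := (hconst g x hx).1
      have : (⟨(rep (g*x))⁻¹ * (g * x), hmem (g*x)⟩ : N) = n * ⟨x, hx⟩ := by
        ext; simp [hrw, hn, mul_assoc]
      simp only [hf', this]
    have e2 : f' x = f ⟨x, hx⟩ := hext ⟨x, hx⟩
    have e3 : f' g = f n := rfl
    rw [e1, e2, e3]
    calc |f (n * ⟨x, hx⟩) - f n - f ⟨x, hx⟩| ≤ D := hD n ⟨x, hx⟩
      _ ≤ D + D' := by linarith
  · -- |f' (x*g) - f' x - f' g|
    set c : N := ⟨r⁻¹ * x * (r⁻¹)⁻¹, hN.conj_mem x hx r⁻¹⟩ with hc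
    have e1 : f' (x * g) = f (c * n) := by
      have hrw : rep (x * g) = r := (hconst g x hx).2
      have : (⟨(rep (x*g))⁻¹ * (x * g), hmem (x*g)⟩ : N) = c * n := by
        ext; simp [hrw, hc, hn]; group
      simp only [hf', this]
    have e2 : f' x = f ⟨x, hx⟩ := hext ⟨x, hx⟩
    have e3 : f' g = f n := rfl
    rw [e1, e2, e3]
    have h1 : |f (c * n) - f c - f n| ≤ D := hD c n
    have h2 : |f c - f ⟨x, hx⟩| ≤ D' := hD' r⁻¹ ⟨x, hx⟩
    calc |f (c * n) - f ⟨x, hx⟩ - f n|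
        = |(f (c * n) - f c - f n) + (f c - f ⟨x, hx⟩)| := by ring_nf
      _ ≤ |f (c * n) - f c - f n| + |f c - f ⟨x, hx⟩| := abs_add_le _ _
      _ ≤ D + D' := add_le_add h1 h2
end

section
/- Let G be a group, N a normal subgroup, and f : N → ℝ a homogeneous G-quasi-invariant quasimorphism. Then D(f) = sup_{h₁,h₂ ∈ N} |f([h₁,h₂])| = sup_{g ∈ G, h ∈ N} |f([g,h])|. In particular |f([g,h])| ≤ D(f) for every g ∈ G and h ∈ N. -/
open scoped commutatorElement

private def cAux {H : Type*} [Group H] (x y : H) : ℕ → H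
  | 0 => 1
  | (m+1) => ((x ^ m)⁻¹ * y * x ^ m) * cAux x y m * y⁻¹

private lemma cAux_spec {H : Type*} [Group H] (x y : H) (m : ℕ) :
    (x * y) ^ m = x ^ m * cAux x y m * y ^ m := by
  induction m with
  | zero => simp [cAux]
  | succ m ih =>
      rw [pow_succ' (x * y) m, ih]
      simp only [cAux]
      rw [pow_succ' x m, pow_succ' y m]
      generalize x ^ m = P
      generalize y ^ m = Q
      generalize cAux x y m = c
      group

private lemma cAux_step {H : Type*} [Group H] (x y : H) (m : ℕ) :
    cAux x y (m+2) =
      (((x ^ m * x)⁻¹ * y) * ⁅x * y * x ^ m, y⁻¹ * y⁻¹ * x⁻¹⁆ * ((x ^ m * x)⁻¹ * y)⁻¹) *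
        (y ^ 2 * cAux x y m * (y ^ 2)⁻¹) := by
  have hc : x ^ m * x = x * x ^ m := by rw [← pow_succ, pow_succ']
  have E1 : cAux x y (m+2)
      = (x * x ^ m)⁻¹ * (y * (x * (y * (x ^ m * (cAux x y m * (y⁻¹ * y⁻¹)))))) := by
    simp only [cAux]
    rw [pow_succ' x m]
    generalize x ^ m = P
    generalize cAux x y m = c
    group
  have E2 : (((x ^ m * x)⁻¹ * y) * ⁅x * y * x ^ m, y⁻¹ * y⁻¹ * x⁻¹⁆ * ((x ^ m * x)⁻¹ * y)⁻¹) *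
        (y ^ 2 * cAux x y m * (y ^ 2)⁻¹)
      = (x ^ m * x)⁻¹ * (y * (x * (y * (x ^ m * (cAux x y m * (y⁻¹ * y⁻¹)))))) := by
    rw [commutatorElement_def]
    generalize x ^ m = P
    generalize cAux x y m = c
    group
  rw [E1, E2, hc]

private lemma aux_nonpos {a b : ℝ} (h : ∀ n : ℕ, (n : ℝ) * a ≤ b) : a ≤ 0 := by
  by_contra hc
  push_neg at hc
  obtain ⟨n, hn⟩ := exists_nat_gt (b / a)
  have h3 : b < (n : ℝ) * a := by
    have := (div_lt_iff₀ hc).mp hn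
    linarith
  exact absurd (h n) (not_le.mpr h3)

/-- For a homogeneous `G`-quasi-invariant quasimorphism `f` on a normal subgroup `N`,
the defect `D(f)` equals the sup of `|f [h₁,h₂]|` over `h₁, h₂ ∈ N` and the sup of
`|f [g,h]|` over `g ∈ G`, `h ∈ N`; in particular `|f [g,h]| ≤ D(f)`. -/
theorem defect_eq_sup_commutators {G : Type*} [Group G] (N : Subgroup G) (hN : N.Normal)
    (f : N → ℝ) (D : ℝ)
    (hD : IsLUB {r : ℝ | ∃ x y : N, r = |f (x * y) - f x - f y|} D)
    (hhom : ∀ (x : N) (n : ℤ), f (x ^ n) = n * f x)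
    (hinv : ∃ D', ∀ (g : G) (x : N), |f ⟨g * x * g⁻¹, hN.conj_mem x x.2 g⟩ - f x| ≤ D') :
    IsLUB {r : ℝ | ∃ h₁ h₂ : N, r = |f ⁅h₁, h₂⁆|} D ∧
      IsLUB {r : ℝ | ∃ (g : G) (h : N),
        r = |f ⟨g * h * g⁻¹ * h⁻¹, mul_mem (hN.conj_mem h h.2 g) (inv_mem h.2)⟩|} D ∧
      ∀ (g : G) (h : N),
        |f ⟨g * h * g⁻¹ * h⁻¹, mul_mem (hN.conj_mem h h.2 g) (inv_mem h.2)⟩| ≤ D := by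
  obtain ⟨D', hD'⟩ := hinv
  have hq : ∀ a b : N, |f (a * b) - f a - f b| ≤ D := fun a b => hD.1 ⟨a, b, rfl⟩
  have fone : f 1 = 0 := by have := hhom 1 0; simpa using this
  have finv : ∀ a : N, f a⁻¹ = - f a := by
    intro a; have := hhom a (-1); simpa using this
  have fnat : ∀ (a : N) (n : ℕ), f (a ^ n) = (n : ℝ) * f a := by
    intro a n
    have := hhom a (n : ℤ)
    rw [zpow_natCast] at this
    exact_mod_cast this
  -- conjugation invariance
  have fconj : ∀ (g : G) (x : N), f ⟨g * x * g⁻¹, hN.conj_mem x x.2 g⟩ = f x := by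
    intro g x
    have key : ∀ n : ℕ, (n : ℝ) * |f ⟨g * x * g⁻¹, hN.conj_mem x x.2 g⟩ - f x| ≤ D' := by
      intro n
      have e : (⟨g * x * g⁻¹, hN.conj_mem x x.2 g⟩ : N) ^ n
          = ⟨g * ↑(x ^ n) * g⁻¹, hN.conj_mem (x ^ n) (x ^ n).2 g⟩ := by
        apply Subtype.ext
        push_cast
        calc ((g * (x : G) * g⁻¹) ^ n) = (MulAut.conj g (x : G)) ^ n := by
              rw [MulAut.conj_apply]
          _ = MulAut.conj g ((x : G) ^ n) := (map_pow _ _ _).symm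
          _ = g * (x : G) ^ n * g⁻¹ := by rw [MulAut.conj_apply]
      have h1 := hD' g (x ^ n)
      rw [← e, fnat, fnat] at h1
      calc (n : ℝ) * |f ⟨g * x * g⁻¹, hN.conj_mem x x.2 g⟩ - f x|
          = |(n : ℝ) * f ⟨g * x * g⁻¹, hN.conj_mem x x.2 g⟩ - (n : ℝ) * f x| := by
            rw [← mul_sub, abs_mul, Nat.abs_cast]
        _ ≤ D' := h1
    have h0 : |f ⟨g * x * g⁻¹, hN.conj_mem x x.2 g⟩ - f x| ≤ 0 := by
      have := aux_nonpos (a := |f ⟨g * x * g⁻¹, hN.conj_mem x x.2 g⟩ - f x|) (b := D') key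
      exact this
    have : |f ⟨g * x * g⁻¹, hN.conj_mem x x.2 g⟩ - f x| = 0 :=
      le_antisymm h0 (abs_nonneg _)
    have := abs_eq_zero.mp this
    linarith [sub_eq_zero.mp this]
  have fconjN : ∀ a b : N, f (a * b * a⁻¹) = f b := by
    intro a b
    have h : (a * b * a⁻¹ : N) = ⟨↑a * ↑b * (↑a)⁻¹, hN.conj_mem b b.2 ↑a⟩ := by
      apply Subtype.ext; push_cast; rfl
    rw [h, fconj]
  have fswap : ∀ a b : N, f (a * b) = f (b * a) := by
    intro a b
    have h : (a * b : N) = a * (b * a) * a⁻¹ := by group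
    rw [h, fconjN]
  -- upper bounds
  have ub1 : ∀ h₁ h₂ : N, |f ⁅h₁, h₂⁆| ≤ D := by
    intro h₁ h₂
    have e : ⁅h₁, h₂⁆ = (h₁ * h₂ * h₁⁻¹) * h₂⁻¹ := by group
    have h1 := hq (h₁ * h₂ * h₁⁻¹) h₂⁻¹
    rw [fconjN, finv] at h1
    rw [e]
    have h2 : f (h₁ * h₂ * h₁⁻¹ * h₂⁻¹) - f h₂ - - f h₂ = f (h₁ * h₂ * h₁⁻¹ * h₂⁻¹) := by ring
    rw [h2] at h1
    exact h1
  have ub2 : ∀ (g : G) (h : N),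
      |f ⟨g * h * g⁻¹ * h⁻¹, mul_mem (hN.conj_mem h h.2 g) (inv_mem h.2)⟩| ≤ D := by
    intro g h
    have e : (⟨g * h * g⁻¹ * h⁻¹, mul_mem (hN.conj_mem h h.2 g) (inv_mem h.2)⟩ : N)
        = (⟨g * h * g⁻¹, hN.conj_mem h h.2 g⟩ : N) * h⁻¹ := by
      apply Subtype.ext; push_cast; rfl
    have h1 := hq (⟨g * h * g⁻¹, hN.conj_mem h h.2 g⟩ : N) h⁻¹
    rw [fconj, finv] at h1
    rw [e]
    have h2 : f ((⟨g * h * g⁻¹, hN.conj_mem h h.2 g⟩ : N) * h⁻¹) - f h - - f h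
        = f ((⟨g * h * g⁻¹, hN.conj_mem h h.2 g⟩ : N) * h⁻¹) := by ring
    rw [h2] at h1
    exact h1
  -- the core "Bavard" lower-bound argument
  have core : ∀ Cb : ℝ, (∀ u v : N, |f ⁅u, v⁆| ≤ Cb) → D ≤ Cb := by
    intro Cb hC
    have fb : ∀ (x y : N) (j : ℕ), f (cAux x y (2 * j)) ≤ (j : ℝ) * (Cb + D) := by
      intro x y j
      induction j with
      | zero => simp [cAux, fone]
      | succ j ih =>
          have hidx : 2 * (j + 1) = 2 * j + 2 := by ring
          rw [hidx, cAux_step]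
          set X := (x ^ (2 * j) * x)⁻¹ * y with hX
          set w := ⁅x * y * x ^ (2 * j), y⁻¹ * y⁻¹ * x⁻¹⁆ with hw
          have h1 := hq (X * w * X⁻¹) (y ^ 2 * cAux x y (2 * j) * (y ^ 2)⁻¹)
          have h2 : f (X * w * X⁻¹) = f w := fconjN X w
          have h3 : f (y ^ 2 * cAux x y (2 * j) * (y ^ 2)⁻¹) = f (cAux x y (2 * j)) :=
            fconjN (y ^ 2) (cAux x y (2 * j))
          have h4 : f w ≤ Cb := le_trans (le_abs_self _) (hC _ _)
          have h5 := (abs_le.mp h1).2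
          push_cast
          linarith
    have key : ∀ (x y : N) (j : ℕ),
        2 * (j : ℝ) * (f (x * y) - f x - f y) ≤ (j : ℝ) * (Cb + D) + 2 * D := by
      intro x y j
      have e1 : f ((x * y) ^ (2 * j)) = 2 * (j : ℝ) * f (x * y) := by
        rw [fnat]; push_cast; ring
      have e2 : (x * y) ^ (2 * j) = x ^ (2 * j) * (cAux x y (2 * j) * y ^ (2 * j)) := by
        rw [cAux_spec, mul_assoc]
      have h4 : f (x ^ (2 * j)) = 2 * (j : ℝ) * f x := by rw [fnat]; push_cast; ring
      have h5 : f (y ^ (2 * j)) = 2 * (j : ℝ) * f y := by rw [fnat]; push_cast; ring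
      have l1 : f ((x * y) ^ (2 * j))
          ≤ f (x ^ (2 * j)) + f (cAux x y (2 * j) * y ^ (2 * j)) + D := by
        rw [e2]
        linarith [(abs_le.mp (hq (x ^ (2 * j)) (cAux x y (2 * j) * y ^ (2 * j)))).2]
      have l2 : f (cAux x y (2 * j) * y ^ (2 * j))
          ≤ f (cAux x y (2 * j)) + f (y ^ (2 * j)) + D := by
        linarith [(abs_le.mp (hq (cAux x y (2 * j)) (y ^ (2 * j)))).2]
      have l3 := fb x y j
      linarith [e1, h4, h5]
    have hδ : ∀ x y : N, f (x * y) - f x - f y ≤ (Cb + D) / 2 := by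
      intro x y
      have h : 2 * (f (x * y) - f x - f y) - (Cb + D) ≤ 0 := by
        apply aux_nonpos (b := 2 * D)
        intro n
        have hk := key x y n
        nlinarith [hk]
      linarith
    have habs : ∀ x y : N, |f (x * y) - f x - f y| ≤ (Cb + D) / 2 := by
      intro x y
      rw [abs_le]
      constructor
      · have h := hδ x⁻¹ y⁻¹
        have e0 : (x⁻¹ * y⁻¹ : N) = (y * x)⁻¹ := by rw [mul_inv_rev]
        rw [e0, finv, fswap y x, finv, finv] at h
        linarith
      · exact hδ x y
    have hub : (Cb + D) / 2 ∈ upperBounds {r : ℝ | ∃ x y : N, r = |f (x * y) - f x - f y|} := by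
      rintro r ⟨x, y, rfl⟩
      exact habs x y
    have := hD.2 hub
    linarith
  refine ⟨⟨?_, ?_⟩, ⟨?_, ?_⟩, ?_⟩
  · rintro r ⟨h₁, h₂, rfl⟩
    exact ub1 h₁ h₂
  · intro b hb
    exact core b (fun u v => hb ⟨u, v, rfl⟩)
  · rintro r ⟨g, h, rfl⟩
    exact ub2 g h
  · intro b hb
    apply core
    intro u v
    exact le_of_eq_of_le (by rfl) (hb ⟨(u : G), v, rfl⟩)
  · exact ub2
end

section
/- Let G be a group, N a normal subgroup, and f : N → ℝ a homogeneous G-quasi-invariant quasimorphism with defect D(f). If x ∈ [G,N] can be written as a product of m commutators of the form [g,h] with g ∈ G, h ∈ N, then |f(x)| ≤ (2m - 1)·D(f). Consequently |f(x)| ≤ 2·D(f)·scl_{G,N}(x), where scl_{G,N}(x) = lim_{n→∞} cl_{G,N}(xⁿ)/n. -/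
open Filter Topology

variable {G : Type*} [Group G]

/-- `x` is a product of `m` `(G,N)`-commutators. -/
def IsCommProd (N : Subgroup G) (m : ℕ) (x : G) : Prop :=
  ∃ c : Fin m → G, (∀ i, ∃ g h : G, h ∈ N ∧ c i = g * h * g⁻¹ * h⁻¹) ∧
    (List.ofFn c).prod = x

/-- The `(G,N)`-commutator length. -/
noncomputable def clGN (N : Subgroup G) (x : G) : ℕ :=
  sInf {m | IsCommProd N m x}

lemma isCommProd_iff_list {N : Subgroup G} {m : ℕ} {y : G} :
    IsCommProd N m y ↔ ∃ l : List G, l.length = m ∧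
      (∀ a ∈ l, ∃ g h : G, h ∈ N ∧ a = g * h * g⁻¹ * h⁻¹) ∧ l.prod = y := by
  constructor
  · rintro ⟨c, hc, hp⟩
    exact ⟨List.ofFn c, List.length_ofFn, by
      intro a ha
      obtain ⟨i, hi⟩ := List.mem_ofFn.mp ha
      exact hi ▸ hc i, hp⟩
  · rintro ⟨l, rfl, hc, hp⟩
    exact ⟨l.get, fun i => hc _ (l.get_mem i), by rw [List.ofFn_get]; exact hp⟩

lemma isCommProd_mul {N : Subgroup G} {a b : ℕ} {y z : G}
    (hy : IsCommProd N a y) (hz : IsCommProd N b z) : IsCommProd N (a + b) (y * z) := by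
  rw [isCommProd_iff_list] at *
  obtain ⟨l1, h1, hc1, hp1⟩ := hy
  obtain ⟨l2, h2, hc2, hp2⟩ := hz
  refine ⟨l1 ++ l2, by simp [h1, h2], ?_, by simp [hp1, hp2]⟩
  intro x hx
  rcases List.mem_append.mp hx with h | h
  exacts [hc1 x h, hc2 x h]

lemma isCommProd_pow {N : Subgroup G} {a : ℕ} {y : G}
    (hy : IsCommProd N a y) (n : ℕ) : IsCommProd N (n * a) (y ^ n) := by
  induction n with
  | zero =>
      rw [isCommProd_iff_list]
      exact ⟨[], by simp, by simp, by simp⟩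
  | succ k ih =>
      have h := isCommProd_mul ih hy
      rw [pow_succ]
      have : (k + 1) * a = k * a + a := by ring
      rw [this]
      exact h

lemma hom_conj {N : Subgroup G} (hN : N.Normal) {f : N → ℝ}
    (hhom : ∀ (x : N) (n : ℤ), f (x ^ n) = n * f x)
    (hinv : ∃ D', ∀ (g : G) (x : N), |f ⟨g * x * g⁻¹, hN.conj_mem x x.2 g⟩ - f x| ≤ D')
    (g : G) (x : N) (h : g * ↑x * g⁻¹ ∈ N) : f ⟨g * ↑x * g⁻¹, h⟩ = f x := by
  obtain ⟨D', hD'⟩ := hinv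
  have key : ∀ n : ℕ, (n : ℝ) * |f ⟨g * ↑x * g⁻¹, h⟩ - f x| ≤ D' := by
    intro n
    have e : (⟨g * ↑x * g⁻¹, h⟩ : N) ^ (n : ℤ)
        = ⟨g * ↑(x ^ (n : ℤ)) * g⁻¹, hN.conj_mem (x ^ (n : ℤ)) (x ^ (n : ℤ)).2 g⟩ := by
      apply Subtype.ext
      rw [SubgroupClass.coe_zpow]
      push_cast
      exact conj_zpow
    have h1 := hhom ⟨g * ↑x * g⁻¹, h⟩ n
    rw [e] at h1
    have h2 := hD' g (x ^ (n : ℤ))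
    have h3 := hhom x n
    calc (n : ℝ) * |f ⟨g * ↑x * g⁻¹, h⟩ - f x|
        = |(n : ℝ) * f ⟨g * ↑x * g⁻¹, h⟩ - (n : ℝ) * f x| := by
          rw [← mul_sub, abs_mul, Nat.abs_cast]
      _ = |f ⟨g * ↑(x ^ (n : ℤ)) * g⁻¹, hN.conj_mem (x ^ (n : ℤ)) (x ^ (n : ℤ)).2 g⟩
            - f (x ^ (n : ℤ))| := by push_cast at h1 h3 ⊢; rw [← h1, ← h3]
      _ ≤ D' := h2
  by_contra hne
  have hpos : 0 < |f ⟨g * ↑x * g⁻¹, h⟩ - f x| := by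
    rw [abs_pos, sub_ne_zero]; exact hne
  obtain ⟨n, hn⟩ := exists_nat_gt (D' / |f ⟨g * ↑x * g⁻¹, h⟩ - f x|)
  have := key n
  rw [div_lt_iff₀ hpos] at hn
  linarith

lemma list_bound {N : Subgroup G} {f : N → ℝ} {D : ℝ}
    (hD : ∀ x y : N, |f (x * y) - f x - f y| ≤ D) :
    ∀ l : List N, l ≠ [] → (∀ a ∈ l, |f a| ≤ D) →
      |f l.prod| ≤ (2 * l.length - 1) * D := by
  intro l
  induction l with
  | nil => intro h; exact absurd rfl h
  | cons a t ih =>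
    intro _ hmem
    rcases eq_or_ne t [] with rfl | ht
    · simp only [List.prod_cons, List.prod_nil, mul_one, List.length_cons, List.length_nil]
      norm_num
      exact hmem a (by simp)
    · have h1 := hD a t.prod
      have h2 := ih ht (fun b hb => hmem b (List.mem_cons_of_mem a hb))
      have h3 := hmem a (by simp)
      have hlen : (1:ℝ) ≤ t.length := by
        have : 1 ≤ t.length := List.length_pos_iff.mpr ht
        exact_mod_cast this
      have h4 : |f (a * t.prod)| ≤ D + |f a| + |f t.prod| := by
        have h5 := abs_add_le (f (a * t.prod) - f a - f t.prod) (f a + f t.prod)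
        have h6 := abs_add_le (f a) (f t.prod)
        have h7 : f (a * t.prod) - f a - f t.prod + (f a + f t.prod) = f (a * t.prod) := by ring
        rw [h7] at h5
        linarith
      have hD0 : 0 ≤ D := le_trans (abs_nonneg _) h3
      simp only [List.prod_cons, List.length_cons]
      push_cast
      calc |f (a * t.prod)| ≤ D + |f a| + |f t.prod| := h4
        _ ≤ D + D + (2 * t.length - 1) * D := by gcongr
        _ = (2 * ((t.length : ℝ) + 1) - 1) * D := by ring

lemma comm_bound {N : Subgroup G} (hN : N.Normal) {f : N → ℝ} {D : ℝ}
    (hD : ∀ x y : N, |f (x * y) - f x - f y| ≤ D)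
    (hhom : ∀ (x : N) (n : ℤ), f (x ^ n) = n * f x)
    (hinv : ∃ D', ∀ (g : G) (x : N), |f ⟨g * x * g⁻¹, hN.conj_mem x x.2 g⟩ - f x| ≤ D')
    {m : ℕ} {y : G} (hy : y ∈ N) (hcp : IsCommProd N m y) (hm : 0 < m) :
    |f ⟨y, hy⟩| ≤ (2 * (m : ℝ) - 1) * D := by
  obtain ⟨c, hc, hprod⟩ := hcp
  have hmem : ∀ i, c i ∈ N := by
    intro i
    obtain ⟨g, h, hh, hci⟩ := hc i
    rw [hci]
    exact N.mul_mem (hN.conj_mem h hh g) (N.inv_mem hh)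
  have hone : ∀ i, |f ⟨c i, hmem i⟩| ≤ D := by
    intro i
    obtain ⟨g, h, hh, hci⟩ := hc i
    set b : N := ⟨h, hh⟩ with hb
    have hmemA : g * (b : G) * g⁻¹ ∈ N := hN.conj_mem b b.2 g
    set a : N := ⟨g * (b : G) * g⁻¹, hmemA⟩ with ha
    have heq : (⟨c i, hmem i⟩ : N) = a * b⁻¹ := by
      apply Subtype.ext
      simp [ha, hb, hci, mul_assoc]
    have hfa : f a = f b := hom_conj hN hhom hinv g b hmemA
    have hfb : f b⁻¹ = - f b := by
      have := hhom b (-1)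
      simpa [zpow_neg_one] using this
    have hq := hD a b⁻¹
    rw [hfa, hfb] at hq
    rw [heq]
    have : f (a * b⁻¹) - f b - (-f b) = f (a * b⁻¹) := by ring
    rw [this] at hq
    exact hq
  set l : List N := List.ofFn (fun i => (⟨c i, hmem i⟩ : N)) with hl
  have hlen : l.length = m := by simp [hl]
  have hlprod : ((l.prod : N) : G) = y := by
    rw [← hprod, hl]
    rw [show ((List.ofFn (fun i => (⟨c i, hmem i⟩ : N))).prod : G)
        = N.subtype (List.ofFn (fun i => (⟨c i, hmem i⟩ : N))).prod from rfl]
    rw [map_list_prod, List.map_ofFn]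
    rfl
  have hxl : (⟨y, hy⟩ : N) = l.prod := by
    apply Subtype.ext
    exact hlprod.symm
  rw [hxl]
  have hne : l ≠ [] := by
    intro h0
    rw [h0] at hlen
    simp at hlen
    omega
  have := list_bound hD l hne (by
    intro a ha
    obtain ⟨i, hi⟩ := List.mem_ofFn.mp ha
    exact hi ▸ hone i)
  rwa [hlen] at this

/-- For a homogeneous `G`-quasi-invariant quasimorphism `f` with defect at most `D`:
if `x ∈ [G,N]` is a product of `m ≥ 1` `(G,N)`-commutators then `|f x| ≤ (2m-1)·D`, and
consequently `|f x| ≤ 2·D·scl_{G,N}(x)`. -/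
theorem abs_le_of_commProd (N : Subgroup G) (hN : N.Normal)
    (f : N → ℝ) (D : ℝ)
    (hD : ∀ x y : N, |f (x * y) - f x - f y| ≤ D)
    (hhom : ∀ (x : N) (n : ℤ), f (x ^ n) = n * f x)
    (hinv : ∃ D', ∀ (g : G) (x : N), |f ⟨g * x * g⁻¹, hN.conj_mem x x.2 g⟩ - f x| ≤ D')
    (x : N) (hx : (x : G) ∈ ⁅(⊤ : Subgroup G), N⁆)
    (m : ℕ) (hm : 0 < m) (hxm : IsCommProd N m (x : G))
    (L : ℝ)
    (hL : Tendsto (fun n : ℕ => (clGN N ((x : G) ^ n) : ℝ) / n) atTop (𝓝 L)) :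
    |f x| ≤ (2 * (m : ℝ) - 1) * D ∧ |f x| ≤ 2 * D * L := by
  have hf1 : f 1 = 0 := by
    have := hhom 1 0
    simpa using this
  have hD0 : (0 : ℝ) ≤ D := by
    have := hD 1 1
    simpa [hf1] using this
  have part1 : |f x| ≤ (2 * (m : ℝ) - 1) * D := by
    have := comm_bound hN hD hhom hinv x.2 hxm hm
    simpa using this
  refine ⟨part1, ?_⟩
  -- key claim
  have claim : ∀ n : ℕ, (n : ℝ) * |f x| ≤ 2 * D * (clGN N ((x : G) ^ n) : ℝ) := by
    intro n
    set k := clGN N ((x : G) ^ n) with hkdef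
    have hne : {j | IsCommProd N j ((x : G) ^ n)}.Nonempty :=
      ⟨n * m, isCommProd_pow hxm n⟩
    have hk : IsCommProd N k ((x : G) ^ n) := Nat.sInf_mem hne
    have hfxn : f (x ^ n) = (n : ℝ) * f x := by
      have := hhom x n
      rw [zpow_natCast] at this
      push_cast at this
      exact this
    have hxnabs : |f (x ^ n)| = (n : ℝ) * |f x| := by
      rw [hfxn, abs_mul, Nat.abs_cast]
    rcases Nat.eq_zero_or_pos k with hk0 | hkpos
    · rw [hk0] at hk
      obtain ⟨c, _, hp⟩ := hk
      have hxn1 : (x : G) ^ n = 1 := by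
        rw [← hp]
        simp
      have : (x ^ n : N) = 1 := by
        apply Subtype.ext
        push_cast
        exact hxn1
      rw [this, hf1] at hfxn
      have h0 : (n : ℝ) * f x = 0 := hfxn.symm
      have h0abs : (n : ℝ) * |f x| = 0 := by
        calc (n : ℝ) * |f x| = |(n : ℝ) * f x| := by rw [abs_mul, Nat.abs_cast]
          _ = 0 := by rw [h0]; simp
      rw [hk0, h0abs]
      simp
    · have hmemxn : ((x : G) ^ n) ∈ N := by
        have : ((x ^ n : N) : G) = (x : G) ^ n := by push_cast; rfl
        rw [← this]; exact (x ^ n).2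
      have hb := comm_bound hN hD hhom hinv hmemxn hk hkpos
      have hsub : (⟨(x : G) ^ n, hmemxn⟩ : N) = x ^ n := by
        apply Subtype.ext; push_cast; rfl
      rw [hsub] at hb
      rw [← hxnabs]
      calc |f (x ^ n)| ≤ (2 * (k : ℝ) - 1) * D := hb
        _ ≤ 2 * D * (k : ℝ) := by nlinarith [hD0, (Nat.one_le_cast (α := ℝ)).mpr hkpos]
  have tend : Tendsto (fun n : ℕ => 2 * D * ((clGN N ((x : G) ^ n) : ℝ) / n)) atTop
      (𝓝 (2 * D * L)) := hL.const_mul (2 * D)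
  refine ge_of_tendsto tend ?_
  filter_upwards [eventually_ge_atTop 1] with n hn
  have hn' : (0 : ℝ) < n := by exact_mod_cast hn
  have := claim n
  rw [mul_div_assoc']
  rw [le_div_iff₀ hn']
  calc |f x| * n = (n : ℝ) * |f x| := by ring
    _ ≤ 2 * D * (clGN N ((x : G) ^ n) : ℝ) := this
    _ = 2 * D * (clGN N ((x : G) ^ n) : ℝ) := rfl
end

section
/- Let G be a group and N a normal subgroup, with q : G → G/N the projection. Suppose there is a subgroup Λ ≤ G/N of finite index and a homomorphism s : Λ → G with q ∘ s = id_Λ. Then for every G-invariant quasimorphism f on N (with |f(gxg⁻¹)-f(x)| ≤ D'(f) for all g ∈ G, x ∈ N), there exists a quasimorphism f' on G with f'|_N = f and D(f') ≤ D(f) + 3·D'(f). In particular, if f is homogeneous (hence G-invariant), f extends to a quasimorphism f' on G with D(f') ≤ D(f). -/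
namespace QmExtAux

variable {G : Type*} [Group G]

/-- Cocycle for the transfer construction: for `g : G` and a left coset `C : G ⧸ K`,
the element `(out (g•C))⁻¹ * (g * out C)` lies in `K`. -/
noncomputable def coc (K : Subgroup G) (g : G) (C : G ⧸ K) : K :=
  ⟨(Quotient.out (g • C))⁻¹ * (g * Quotient.out C), by
    have h1 : ((g * Quotient.out C : G) : G ⧸ K) = g • C := by
      have h : ((g * Quotient.out C : G) : G ⧸ K) = g • ((Quotient.out C : G) : G ⧸ K) := rfl
      rw [h, QuotientGroup.out_eq']
    exact QuotientGroup.eq.mp ((QuotientGroup.out_eq' (g • C)).trans h1.symm)⟩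

lemma coc_mul (K : Subgroup G) (a b : G) (C : G ⧸ K) :
    coc K (a * b) C = coc K a (b • C) * coc K b C := by
  apply Subtype.ext
  show (Quotient.out ((a * b) • C))⁻¹ * (a * b * Quotient.out C)
      = (Quotient.out (a • (b • C)))⁻¹ * (a * Quotient.out (b • C)) *
        ((Quotient.out (b • C))⁻¹ * (b * Quotient.out C))
  rw [mul_smul]
  group

variable {N : Subgroup G} [hN : N.Normal] {Λ : Subgroup (G ⧸ N)}

/-- The pullback of `Λ` to `G`. -/
def Ksub (N : Subgroup G) [N.Normal] (Λ : Subgroup (G ⧸ N)) : Subgroup G :=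
  Λ.comap (QuotientGroup.mk' N)

lemma NleK : N ≤ Ksub N Λ := by
  intro x hx
  show QuotientGroup.mk' N x ∈ Λ
  rw [QuotientGroup.mk'_apply, (QuotientGroup.eq_one_iff x).mpr hx]
  exact Λ.one_mem

/-- The `Λ`-component of an element of `K`. -/
def lam (k : Ksub N Λ) : Λ := ⟨QuotientGroup.mk' N k, k.2⟩

lemma lam_mul (k₁ k₂ : Ksub N Λ) : lam (k₁ * k₂) = lam k₁ * lam k₂ := by
  apply Subtype.ext
  show QuotientGroup.mk' N ((k₁ : G) * (k₂ : G)) = _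
  rw [map_mul]
  rfl

/-- The `N`-component of an element of `K`, relative to the section `s`. -/
def nmap (s : Λ →* G) (hs : ∀ l : Λ, QuotientGroup.mk' N (s l) = (l : G ⧸ N))
    (k : Ksub N Λ) : N :=
  ⟨(k : G) * (s (lam k))⁻¹, by
    rw [← QuotientGroup.eq_one_iff, ← QuotientGroup.mk'_apply N, map_mul, map_inv, hs]
    show QuotientGroup.mk' N (k : G) * (QuotientGroup.mk' N (k : G))⁻¹ = 1
    simp⟩

lemma nmap_mul (s : Λ →* G) (hs : ∀ l : Λ, QuotientGroup.mk' N (s l) = (l : G ⧸ N))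
    (k₁ k₂ : Ksub N Λ) :
    nmap s hs (k₁ * k₂) = nmap s hs k₁ *
      ⟨s (lam k₁) * (nmap s hs k₂ : G) * (s (lam k₁))⁻¹,
        hN.conj_mem _ (nmap s hs k₂).2 _⟩ := by
  apply Subtype.ext
  show ((k₁ * k₂ : Ksub N Λ) : G) * (s (lam (k₁ * k₂)))⁻¹
      = ((k₁ : G) * (s (lam k₁))⁻¹) * (s (lam k₁) * ((k₂ : G) * (s (lam k₂))⁻¹) * (s (lam k₁))⁻¹)
  rw [lam_mul, map_mul]
  show (k₁ : G) * (k₂ : G) * (s (lam k₁) * s (lam k₂))⁻¹ = _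
  group

lemma nmap_of_mem (s : Λ →* G) (hs : ∀ l : Λ, QuotientGroup.mk' N (s l) = (l : G ⧸ N))
    (k : Ksub N Λ) (hk : (k : G) ∈ N) : nmap s hs k = ⟨(k : G), hk⟩ := by
  apply Subtype.ext
  show (k : G) * (s (lam k))⁻¹ = (k : G)
  have h1 : lam k = (1 : Λ) := by
    apply Subtype.ext
    show QuotientGroup.mk' N (k : G) = _
    rw [QuotientGroup.mk'_apply, (QuotientGroup.eq_one_iff _).mpr hk]
    rfl
  rw [h1, map_one, inv_one, mul_one]


theorem extension_aux {G : Type*} [Group G] (N : Subgroup G) [hN : N.Normal]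
    (Λ : Subgroup (G ⧸ N)) [Λ.FiniteIndex] (s : Λ →* G)
    (hs : ∀ l : Λ, QuotientGroup.mk' N (s l) = (l : G ⧸ N))
    (f : N → ℝ) (D D' : ℝ)
    (hD : ∀ x y : N, |f (x * y) - f x - f y| ≤ D)
    (hD' : ∀ (g : G) (x : N), |f ⟨g * x * g⁻¹, hN.conj_mem x x.2 g⟩ - f x| ≤ D') :
    ∃ f' : G → ℝ, (∀ x : N, f' x = f x) ∧
        ∀ a b : G, |f' (a * b) - f' a - f' b| ≤ D + 3 * D' := by
  classical
  have hD'0 : 0 ≤ D' := le_trans (abs_nonneg _) (hD' 1 1)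
  -- the pullback subgroup has finite index
  have hidx : (Ksub N Λ).index ≠ 0 := by
    have h1 : (Ksub N Λ).index = Λ.index := by
      rw [Ksub, Subgroup.index_comap,
        MonoidHom.range_eq_top_of_surjective _ (QuotientGroup.mk'_surjective N),
        Subgroup.relIndex_top_right]
    rw [h1]
    exact Subgroup.FiniteIndex.index_ne_zero
  have hfin : Finite (G ⧸ Ksub N Λ) := by
    have := Subgroup.index_eq_card (Ksub N Λ)
    exact Nat.finite_of_card_ne_zero (by omega)
  letI : Fintype (G ⧸ Ksub N Λ) := Fintype.ofFinite _
  have hnpos : 0 < ((Fintype.card (G ⧸ Ksub N Λ) : ℝ)) := by exact_mod_cast Fintype.card_pos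
  -- defect of f ∘ nmap on K
  have f1_defect : ∀ k₁ k₂ : Ksub N Λ,
      |f (nmap s hs (k₁ * k₂)) - f (nmap s hs k₁) - f (nmap s hs k₂)| ≤ D + D' := by
    intro k₁ k₂
    rw [nmap_mul s hs k₁ k₂]
    have h1 := hD (nmap s hs k₁)
      ⟨s (lam k₁) * (nmap s hs k₂ : G) * (s (lam k₁))⁻¹, hN.conj_mem _ (nmap s hs k₂).2 _⟩
    have h2 := hD' (s (lam k₁)) (nmap s hs k₂)
    have h1' := abs_le.mp h1
    have h2' := abs_le.mp h2
    rw [abs_le]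
    constructor <;> linarith [h1'.1, h1'.2, h2'.1, h2'.2]
  -- the transfer
  set φ : G → ℝ := fun g =>
    (∑ C : G ⧸ Ksub N Λ, f (nmap s hs (coc (Ksub N Λ) g C))) / (Fintype.card (G ⧸ Ksub N Λ))
    with hφ
  have φdef : ∀ a b : G, |φ (a * b) - φ a - φ b| ≤ D + D' := by
    intro a b
    have hre : ∑ C : G ⧸ Ksub N Λ, f (nmap s hs (coc (Ksub N Λ) a C))
        = ∑ C : G ⧸ Ksub N Λ, f (nmap s hs (coc (Ksub N Λ) a (b • C))) :=
      (Fintype.sum_equiv (MulAction.toPerm b)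
        (fun C => f (nmap s hs (coc (Ksub N Λ) a (b • C))))
        (fun C => f (nmap s hs (coc (Ksub N Λ) a C))) (fun C => rfl)).symm
    have key : φ (a * b) - φ a - φ b
        = (∑ C : G ⧸ Ksub N Λ,
            (f (nmap s hs (coc (Ksub N Λ) a (b • C) * coc (Ksub N Λ) b C))
              - f (nmap s hs (coc (Ksub N Λ) a (b • C)))
              - f (nmap s hs (coc (Ksub N Λ) b C)))) / (Fintype.card (G ⧸ Ksub N Λ)) := by
      rw [hφ]
      simp only
      rw [hre, Finset.sum_sub_distrib, Finset.sum_sub_distrib]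
      have : ∀ C : G ⧸ Ksub N Λ, coc (Ksub N Λ) (a * b) C
          = coc (Ksub N Λ) a (b • C) * coc (Ksub N Λ) b C := fun C => coc_mul _ a b C
      simp only [this]
      ring
    rw [key, abs_div, abs_of_pos hnpos, div_le_iff₀ hnpos]
    calc |∑ C : G ⧸ Ksub N Λ, _| ≤ ∑ C : G ⧸ Ksub N Λ,
        |f (nmap s hs (coc (Ksub N Λ) a (b • C) * coc (Ksub N Λ) b C))
          - f (nmap s hs (coc (Ksub N Λ) a (b • C)))
          - f (nmap s hs (coc (Ksub N Λ) b C))| := Finset.abs_sum_le_sum_abs _ _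
      _ ≤ (Fintype.card (G ⧸ Ksub N Λ)) • (D + D') :=
        Finset.sum_le_card_nsmul _ _ _ (by
          intro C _
          exact f1_defect _ _)
      _ = (D + D') * (Fintype.card (G ⧸ Ksub N Λ)) := by
        rw [nsmul_eq_mul]; ring
  -- φ is close to f on N
  have φN : ∀ x : N, |φ (x : G) - f x| ≤ D' := by
    intro x
    have hfix : ∀ C : G ⧸ Ksub N Λ, (x : G) • C = C := by
      intro C
      conv_lhs => rw [← QuotientGroup.out_eq' C]
      conv_rhs => rw [← QuotientGroup.out_eq' C]
      show (((x : G) * Quotient.out C : G) : G ⧸ Ksub N Λ) = _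
      rw [QuotientGroup.eq]
      have h : ((x : G) * Quotient.out C)⁻¹ * Quotient.out C
          = (Quotient.out C)⁻¹ * (x : G)⁻¹ * ((Quotient.out C)⁻¹)⁻¹ := by group
      rw [h]
      exact NleK (hN.conj_mem _ (inv_mem x.2) _)
    have hterm : ∀ C : G ⧸ Ksub N Λ, |f (nmap s hs (coc (Ksub N Λ) (x : G) C)) - f x| ≤ D' := by
      intro C
      have hv : (coc (Ksub N Λ) (x : G) C : G)
          = (Quotient.out C)⁻¹ * (x : G) * ((Quotient.out C)⁻¹)⁻¹ := by
        show (Quotient.out ((x : G) • C))⁻¹ * ((x : G) * Quotient.out C) = _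
        rw [hfix C]
        group
      have hvN : (coc (Ksub N Λ) (x : G) C : G) ∈ N := hv ▸ hN.conj_mem _ x.2 _
      have e2 : nmap s hs (coc (Ksub N Λ) (x : G) C)
          = ⟨(Quotient.out C)⁻¹ * (x : G) * ((Quotient.out C)⁻¹)⁻¹, hN.conj_mem x x.2 _⟩ :=
        (nmap_of_mem s hs _ hvN).trans (Subtype.ext hv)
      rw [e2]
      exact hD' (Quotient.out C)⁻¹ x
    have key : φ (x : G) - f x
        = (∑ C : G ⧸ Ksub N Λ, (f (nmap s hs (coc (Ksub N Λ) (x : G) C)) - f x))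
          / (Fintype.card (G ⧸ Ksub N Λ)) := by
      rw [hφ]
      simp only
      rw [Finset.sum_sub_distrib, Finset.sum_const, Finset.card_univ, nsmul_eq_mul]
      field_simp
    rw [key, abs_div, abs_of_pos hnpos, div_le_iff₀ hnpos]
    calc |∑ C : G ⧸ Ksub N Λ, _| ≤ ∑ C : G ⧸ Ksub N Λ,
        |f (nmap s hs (coc (Ksub N Λ) (x : G) C)) - f x| := Finset.abs_sum_le_sum_abs _ _
      _ ≤ (Fintype.card (G ⧸ Ksub N Λ)) • D' :=
        Finset.sum_le_card_nsmul _ _ _ (fun C _ => hterm C)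
      _ = D' * (Fintype.card (G ⧸ Ksub N Λ)) := by rw [nsmul_eq_mul]; ring
  -- the final extension
  refine ⟨fun g => if hg : g ∈ N then f ⟨g, hg⟩ else φ g, ?_, ?_⟩
  · intro x
    simp only [dif_pos x.2]
  · intro a b
    have hφab := abs_le.mp (φdef a b)
    by_cases ha : a ∈ N <;> by_cases hb : b ∈ N
    · have hab : a * b ∈ N := mul_mem ha hb
      simp only [dif_pos hab, dif_pos ha, dif_pos hb]
      have h := abs_le.mp (hD ⟨a, ha⟩ ⟨b, hb⟩)
      show |f (⟨a, ha⟩ * ⟨b, hb⟩ : N) - f ⟨a, ha⟩ - f ⟨b, hb⟩| ≤ D + 3 * D'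
      rw [abs_le]
      constructor <;> linarith [h.1, h.2]
    · have hab : a * b ∉ N := by
        intro h
        exact hb (by simpa using mul_mem (inv_mem ha) h)
      simp only [dif_neg hab, dif_pos ha, dif_neg hb]
      have h2 := abs_le.mp (φN ⟨a, ha⟩)
      rw [abs_le]
      constructor <;> linarith [hφab.1, hφab.2, h2.1, h2.2]
    · have hab : a * b ∉ N := by
        intro h
        exact ha (by simpa [mul_assoc] using mul_mem h (inv_mem hb))
      simp only [dif_neg hab, dif_neg ha, dif_pos hb]
      have h2 := abs_le.mp (φN ⟨b, hb⟩)
      rw [abs_le]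
      constructor <;> linarith [hφab.1, hφab.2, h2.1, h2.2]
    · by_cases hab : a * b ∈ N
      · simp only [dif_pos hab, dif_neg ha, dif_neg hb]
        have h2 := abs_le.mp (φN ⟨a * b, hab⟩)
        rw [abs_le]
        constructor <;> linarith [hφab.1, hφab.2, h2.1, h2.2]
      · simp only [dif_neg hab, dif_neg ha, dif_neg hb]
        rw [abs_le]
        constructor <;> linarith [hφab.1, hφab.2]

end QmExtAux

/-- Extension theorem for `G`-(quasi-)invariant quasimorphisms under a virtual splitting:
if `Λ ≤ G/N` has finite index and admits a homomorphic section `s : Λ → G`, then every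
`G`-quasi-invariant quasimorphism `f` on `N` extends to a quasimorphism `f'` on `G` with
`D(f') ≤ D(f) + 3·D'(f)`; if moreover `f` is homogeneous, the extension can be chosen
with `D(f') ≤ D(f)`. -/
theorem extension_theorem {G : Type*} [Group G] (N : Subgroup G) [hN : N.Normal]
    (Λ : Subgroup (G ⧸ N)) [Λ.FiniteIndex] (s : Λ →* G)
    (hs : ∀ l : Λ, QuotientGroup.mk' N (s l) = (l : G ⧸ N))
    (f : N → ℝ) (D D' : ℝ)
    (hD : ∀ x y : N, |f (x * y) - f x - f y| ≤ D)
    (hD' : ∀ (g : G) (x : N), |f ⟨g * x * g⁻¹, hN.conj_mem x x.2 g⟩ - f x| ≤ D') :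
    (∃ f' : G → ℝ, (∀ x : N, f' x = f x) ∧
        ∀ a b : G, |f' (a * b) - f' a - f' b| ≤ D + 3 * D') ∧
      ((∀ (x : N) (n : ℤ), f (x ^ n) = n * f x) →
        ∃ f' : G → ℝ, (∀ x : N, f' x = f x) ∧
          ∀ a b : G, |f' (a * b) - f' a - f' b| ≤ D) := by
  constructor
  · exact QmExtAux.extension_aux N Λ s hs f D D' hD hD'
  · intro hhom
    -- homogeneity upgrades quasi-invariance to exact invariance
    have hD'' : ∀ (g : G) (x : N), |f ⟨g * x * g⁻¹, hN.conj_mem x x.2 g⟩ - f x| ≤ (0 : ℝ) := by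
      intro g x
      set c : N := ⟨g * x * g⁻¹, hN.conj_mem x x.2 g⟩ with hc
      have key : ∀ m : ℕ, 0 < m → |f c - f x| ≤ D' / m := by
        intro m hm
        have hmpos : (0 : ℝ) < m := by exact_mod_cast hm
        have hcpow : c ^ m = ⟨g * ((x ^ m : N) : G) * g⁻¹, hN.conj_mem _ (x ^ m).2 g⟩ := by
          apply Subtype.ext
          show ((c : G)) ^ m = g * ((x : G)) ^ m * g⁻¹
          rw [hc]
          exact conj_pow
        have h1 := hD' g (x ^ m)
        rw [← hcpow] at h1
        have h2 : f (c ^ m) = (m : ℝ) * f c := by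
          have := hhom c (m : ℤ)
          rw [zpow_natCast] at this
          exact_mod_cast this
        have h3 : f ((x : N) ^ m) = (m : ℝ) * f x := by
          have := hhom x (m : ℤ)
          rw [zpow_natCast] at this
          exact_mod_cast this
        rw [h2, h3] at h1
        have h4 : |(m : ℝ) * (f c - f x)| ≤ D' := by
          rw [mul_sub]; exact h1
        rw [abs_mul, abs_of_pos hmpos] at h4
        rw [le_div_iff₀ hmpos, mul_comm]
        exact h4
      by_contra hcon
      push_neg at hcon
      obtain ⟨m, hm⟩ := exists_nat_gt (D' / |f c - f x|)
      have hm1 : (0 : ℕ) < m + 1 := Nat.succ_pos m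
      have hle := key (m + 1) hm1
      have hmR : D' / |f c - f x| < ((m : ℝ) + 1) := lt_of_lt_of_le hm (by push_cast; linarith)
      have hlt : D' / ((m : ℝ) + 1) < |f c - f x| := by
        rw [div_lt_iff₀ (by positivity)]
        calc D' = (D' / |f c - f x|) * |f c - f x| := by field_simp
          _ < ((m : ℝ) + 1) * |f c - f x| := mul_lt_mul_of_pos_right hmR hcon
          _ = |f c - f x| * ((m : ℝ) + 1) := by ring
      have : ((m + 1 : ℕ) : ℝ) = (m : ℝ) + 1 := by push_cast; ring
      rw [this] at hle
      linarith
    obtain ⟨f', hext, hdef⟩ := QmExtAux.extension_aux N Λ s hs f D 0 hD hD''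
    exact ⟨f', hext, fun a b => by have := hdef a b; linarith⟩
end

section
/- Let G be a finitely generated group and N a normal subgroup of finite index. Then the quotient group [G,G]/[G,N] is finite. -/
open Subgroup QuotientGroup
open scoped commutatorElement

lemma conj_central {Q : Type*} [Group Q] (z x a : Q) (hz : ∀ b, b * z = z * b) :
    (a * z) * x * (a * z)⁻¹ = a * x * a⁻¹ := by
  have : z * x * z⁻¹ = x := by rw [← hz x, mul_inv_cancel_right]
  calc (a * z) * x * (a * z)⁻¹ = a * (z * x * z⁻¹) * a⁻¹ := by group
    _ = a * x * a⁻¹ := by rw [this]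

lemma comm_central {Q : Type*} [Group Q] (g h z w : Q)
    (hz : ∀ b, b * z = z * b) (hw : ∀ b, b * w = w * b) :
    ⁅g * z, h * w⁆ = ⁅g, h⁆ := by
  have h1 : ⁅g * z, h * w⁆ = (g * z) * (h * w) * (g * z)⁻¹ * (h * w)⁻¹ :=
    commutatorElement_def _ _
  rw [h1, conj_central z (h * w) g hz]
  have h2 : g * (h * w) * g⁻¹ * (h * w)⁻¹ = ((h * w) * g * (h * w)⁻¹ * g⁻¹)⁻¹ := by group
  rw [h2, conj_central w g h hw]
  group

/-- Schur-style auxiliary fact: if the center has finite index, the commutator set is finite. -/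
lemma aux_finite_commutatorSet {Q : Type*} [Group Q] [(Subgroup.center Q).FiniteIndex] :
    Finite (commutatorSet Q) := by
  have hfin : Finite (Q ⧸ Subgroup.center Q) :=
    Subgroup.finite_quotient_of_finiteIndex
  have hsub : commutatorSet Q ⊆
      Set.range (fun p : (Q ⧸ Subgroup.center Q) × (Q ⧸ Subgroup.center Q) =>
        ⁅Quotient.out p.1, Quotient.out p.2⁆) := by
    rintro _ ⟨g, h, rfl⟩
    refine ⟨(QuotientGroup.mk g, QuotientGroup.mk h), ?_⟩
    obtain ⟨z, hgz⟩ := QuotientGroup.mk_out_eq_mul (Subgroup.center Q) g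
    obtain ⟨w, hhw⟩ := QuotientGroup.mk_out_eq_mul (Subgroup.center Q) h
    have hz := Subgroup.mem_center_iff.mp z.2
    have hw := Subgroup.mem_center_iff.mp w.2
    show ⁅Quotient.out (QuotientGroup.mk g : Q ⧸ Subgroup.center Q),
      Quotient.out (QuotientGroup.mk h : Q ⧸ Subgroup.center Q)⁆ = ⁅g, h⁆
    rw [hgz, hhw]
    exact comm_central g h (z : Q) (w : Q) hz hw
  exact Set.Finite.subset (Set.toFinite _) hsub

/-- If `G` is finitely generated and `N` is a normal subgroup of finite index,
then `[G,G]/[G,N]` is finite. -/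
theorem commutator_quot_finite {G : Type*} [Group G] [Group.FG G]
    (N : Subgroup G) [N.Normal] [N.FiniteIndex] :
    Finite ((⁅(⊤ : Subgroup G), (⊤ : Subgroup G)⁆ : Subgroup G) ⧸
      (⁅(⊤ : Subgroup G), N⁆.subgroupOf ⁅(⊤ : Subgroup G), (⊤ : Subgroup G)⁆)) := by
  set H : Subgroup G := ⁅(⊤ : Subgroup G), N⁆ with hH
  haveI : H.Normal := Subgroup.commutator_normal ⊤ N
  set Q := G ⧸ H
  set π : G →* Q := QuotientGroup.mk' H with hπ
  have hπsurj : Function.Surjective π := QuotientGroup.mk'_surjective H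
  -- the image of N is central in Q
  have hNcentral : N.map π ≤ Subgroup.center Q := by
    rintro _ ⟨n, hn, rfl⟩
    rw [Subgroup.mem_center_iff]
    intro q
    obtain ⟨g, rfl⟩ := hπsurj q
    rw [← map_mul, ← map_mul]
    apply QuotientGroup.eq.mpr
    have : (g * n)⁻¹ * (n * g) = ⁅n⁻¹, g⁻¹⁆ := by group
    rw [this]
    rw [hH, Subgroup.commutator_comm]
    exact Subgroup.commutator_mem_commutator (inv_mem hn) (Subgroup.mem_top _)
  -- the image of N has finite index
  have hker : π.ker ≤ N := by
    rw [hπ, QuotientGroup.ker_mk']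
    exact Subgroup.commutator_le_right ⊤ N
  haveI : (N.map π).FiniteIndex := by
    constructor
    rw [Subgroup.index_map_eq N hπsurj hker]
    exact Subgroup.FiniteIndex.index_ne_zero
  haveI : (Subgroup.center Q).FiniteIndex := Subgroup.finiteIndex_of_le hNcentral
  haveI : Finite (commutatorSet Q) := aux_finite_commutatorSet
  haveI hfin : Finite (_root_.commutator Q) := inferInstance
  -- now transport along the first isomorphism theorem
  set K : Subgroup G := ⁅(⊤ : Subgroup G), (⊤ : Subgroup G)⁆ with hK
  set φ : K →* Q := π.comp K.subtype with hφ
  have hkerφ : φ.ker = H.subgroupOf K := by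
    rw [hφ, ← MonoidHom.comap_ker, hπ, QuotientGroup.ker_mk']
    rfl
  have hrange : φ.range = _root_.commutator Q := by
    rw [hφ, MonoidHom.range_comp, Subgroup.range_subtype, hK, Subgroup.map_commutator,
      Subgroup.map_top_of_surjective π hπsurj]
    exact (_root_.commutator_def Q).symm
  have e : (K ⧸ H.subgroupOf K) ≃* φ.range :=
    (QuotientGroup.quotientMulEquivOfEq hkerφ.symm).trans (QuotientGroup.quotientKerEquivRange φ)
  have : Finite φ.range := by rw [hrange]; exact hfin
  exact Finite.of_equiv _ e.symm.toEquiv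
end

section
/- Let G be a group and N a normal subgroup with N finitely generated, and suppose the projection q : G → G/N virtually splits (there exist a finite-index subgroup Λ ≤ G/N and a homomorphism s : Λ → G with q∘s = id_Λ). Then the group ([G,G] ∩ N)/[G,N] is finite. -/
open Subgroup
open scoped Pointwise
open scoped commutatorElement

lemma subgroup_fg_of_comm_fg {A : Type*} [CommGroup A] [Group.FG A] (B : Subgroup A) :
    Group.FG B := by
  rw [Group.fg_iff_subgroup_fg, Subgroup.fg_iff_add_fg]
  haveI : Module.Finite ℤ (Additive A) := Module.Finite.iff_addGroup_fg.mpr inferInstance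
  have h := IsNoetherian.noetherian (AddSubgroup.toIntSubmodule (B.toAddSubgroup))
  rw [Submodule.fg_iff_addSubgroup_fg, AddSubgroup.toIntSubmodule_toAddSubgroup] at h
  exact h

lemma central_mod {G : Type*} [Group G] (N : Subgroup G) [N.Normal] {m : G} (hm : m ∈ N)
    (y : G ⧸ ⁅(⊤ : Subgroup G), N⁆) :
    QuotientGroup.mk' ⁅(⊤ : Subgroup G), N⁆ m * y = y * QuotientGroup.mk' ⁅(⊤ : Subgroup G), N⁆ m := by
  induction y using QuotientGroup.induction_on with
  | H g =>
    have h1 : ⁅QuotientGroup.mk' ⁅(⊤ : Subgroup G), N⁆ m,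
        QuotientGroup.mk' ⁅(⊤ : Subgroup G), N⁆ g⁆ = 1 := by
      rw [← map_commutatorElement]
      refine (QuotientGroup.eq_one_iff _).mpr ?_
      rw [Subgroup.commutator_comm]
      exact commutator_mem_commutator hm (mem_top g)
    exact commutatorElement_eq_one_iff_mul_comm.mp h1

lemma comm_central_s13 {M : Type*} [Group M] {u v A B : M}
    (hu : ∀ g, u * g = g * u) (hv : ∀ g, v * g = g * v) :
    ⁅A * u, B * v⁆ = ⁅A, B⁆ := by
  have hu' : ∀ g, u * g * u⁻¹ = g := fun g => by rw [hu g, mul_inv_cancel_right]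
  have hv' : ∀ g, v * g * v⁻¹ = g := fun g => by rw [hv g, mul_inv_cancel_right]
  simp only [commutatorElement_def, mul_inv_rev]
  calc A * u * (B * v) * (u⁻¹ * A⁻¹) * (v⁻¹ * B⁻¹)
      = A * (u * (B * v) * u⁻¹) * (A⁻¹ * v⁻¹) * B⁻¹ := by group
    _ = A * (B * v) * (A⁻¹ * v⁻¹) * B⁻¹ := by rw [hu' (B * v)]
    _ = A * B * (v * A⁻¹ * v⁻¹) * B⁻¹ := by group
    _ = A * B * A⁻¹ * B⁻¹ := by rw [hv' A⁻¹]

lemma commutator_self_le {G : Type*} [Group G] (H : Subgroup G) : ⁅H, H⁆ ≤ H :=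
  Subgroup.commutator_le.mpr fun p hp q hq => by
    rw [commutatorElement_def]
    exact mul_mem (mul_mem (mul_mem hp hq) (inv_mem hp)) (inv_mem hq)

lemma splitA {G : Type*} [Group G] (N : Subgroup G) [hN : N.Normal]
    (Λ : Subgroup (G ⧸ N)) (s : Λ →* G)
    (hs : ∀ l : Λ, QuotientGroup.mk' N (s l) = (l : G ⧸ N)) :
    ⁅Λ.comap (QuotientGroup.mk' N), Λ.comap (QuotientGroup.mk' N)⁆ ⊓ N ≤
      ⁅(⊤ : Subgroup G), N⁆ := by
  set L := ⁅(⊤ : Subgroup G), N⁆ with hLdef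
  set π := QuotientGroup.mk' L with hπdef
  set H := s.range with hHdef
  set G' := Λ.comap (QuotientGroup.mk' N) with hG'def
  -- members of H ∩ N are trivial
  have hHN : ∀ x ∈ H, x ∈ N → x = 1 := by
    rintro x ⟨l, rfl⟩ hxN
    have h1 : QuotientGroup.mk' N (s l) = 1 := by
      rw [← MonoidHom.mem_ker, QuotientGroup.ker_mk']; exact hxN
    have h2 : l = 1 := by
      have := hs l
      rw [h1] at this
      exact Subtype.ext this.symm
    rw [h2, map_one]
  -- decomposition of elements of G'
  have hdec : ∀ a ∈ G', ∃ h ∈ H, ∃ n ∈ N, a = h * n := by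
    intro a ha
    rw [hG'def, Subgroup.mem_comap] at ha
    refine ⟨s ⟨_, ha⟩, ⟨_, rfl⟩, (s ⟨_, ha⟩)⁻¹ * a, ?_, by group⟩
    have h1 : QuotientGroup.mk' N ((s ⟨_, ha⟩)⁻¹ * a) = 1 := by
      rw [map_mul, map_inv, hs]; simp
    exact (QuotientGroup.eq_one_iff _).mp h1
  -- main claim
  have claim : ⁅G', G'⁆ ≤ ⁅H, H⁆ ⊔ L := by
    rw [Subgroup.commutator_le]
    intro a ha b hb
    obtain ⟨ha', hha', na, hna, haeq⟩ := hdec a ha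
    obtain ⟨hb', hhb', nb, hnb, hbeq⟩ := hdec b hb
    have hπ : π ⁅a, b⁆ = π ⁅ha', hb'⁆ := by
      rw [map_commutatorElement, map_commutatorElement, haeq, hbeq, map_mul, map_mul]
      exact comm_central_s13 (central_mod N hna) (central_mod N hnb)
    have hker : ⁅a, b⁆ * ⁅ha', hb'⁆⁻¹ ∈ L := by
      rw [← QuotientGroup.ker_mk' L, MonoidHom.mem_ker, map_mul, map_inv, ← hπdef, hπ,
        mul_inv_cancel]
    have : ⁅a, b⁆ = (⁅a, b⁆ * ⁅ha', hb'⁆⁻¹) * ⁅ha', hb'⁆ := by group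
    rw [this]
    exact mul_mem (le_sup_right (α := Subgroup G) hker)
      (le_sup_left (α := Subgroup G) (commutator_mem_commutator hha' hhb'))
  -- conclude
  rintro x ⟨hxc, hxN⟩
  set HH : Subgroup G := ⁅H, H⁆ with hHHdef
  have hx2 : x ∈ HH ⊔ L := claim hxc
  have hset : (↑(HH ⊔ L) : Set G) = (HH : Set G) * (L : Set G) :=
    Subgroup.mul_normal HH L
  have hx3 : x ∈ (HH : Set G) * (L : Set G) := by rw [← hset]; exact hx2
  obtain ⟨h, hh, l, hl, rfl⟩ := hx3
  have hlN : l ∈ N := Subgroup.commutator_le_right ⊤ N hl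
  have hhN : h ∈ N := by
    have : h = h * l * l⁻¹ := by group
    rw [this]; exact mul_mem hxN (inv_mem hlN)
  have hh1 : h = 1 := hHN h (commutator_self_le H hh) hhN
  rw [hh1]
  simpa using hl

lemma powB {G : Type*} [Group G] (N : Subgroup G) [hN : N.Normal]
    (Λ : Subgroup (G ⧸ N)) [Λ.FiniteIndex] (s : Λ →* G)
    (hs : ∀ l : Λ, QuotientGroup.mk' N (s l) = (l : G ⧸ N)) :
    ∀ g ∈ ⁅(⊤ : Subgroup G), (⊤ : Subgroup G)⁆ ⊓ N, g ^ Λ.index ∈ ⁅(⊤ : Subgroup G), N⁆ := by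
  set L := ⁅(⊤ : Subgroup G), N⁆ with hLdef
  set π := QuotientGroup.mk' L with hπdef
  set G' := Λ.comap (QuotientGroup.mk' N) with hG'def
  set Gb := G'.map π with hGbdef
  have hLN : L ≤ N := Subgroup.commutator_le_right ⊤ N
  have hNG' : N ≤ G' := by
    intro x hx
    rw [hG'def, Subgroup.mem_comap]
    have : QuotientGroup.mk' N x = 1 := (QuotientGroup.eq_one_iff x).mpr hx
    rw [this]; exact one_mem Λ
  have hindex : Gb.index = Λ.index := by
    have e1 : (G'.map (QuotientGroup.mk' L)).index = G'.index :=
      G'.index_map_eq (QuotientGroup.mk'_surjective L)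
        (by rw [QuotientGroup.ker_mk']; exact hLN.trans hNG')
    have e2 : G'.index = Λ.index :=
      Λ.index_comap_of_surjective (QuotientGroup.mk'_surjective N)
    rw [hGbdef, hπdef, e1, e2]
  haveI : Gb.FiniteIndex := ⟨by rw [hindex]; exact Subgroup.FiniteIndex.index_ne_zero⟩
  rintro g ⟨hgc, hgN⟩
  set x : G ⧸ L := π g with hxdef
  have hcen : ∀ y, x * y = y * x := central_mod N hgN
  set T := MonoidHom.transfer (Abelianization.of : Gb →* Abelianization Gb) with hTdef
  have h1 : T x = 1 := by
    apply Abelianization.commutator_subset_ker T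
    have : x ∈ (⁅(⊤ : Subgroup G), (⊤ : Subgroup G)⁆).map π :=
      Subgroup.mem_map_of_mem π hgc
    rw [Subgroup.map_commutator] at this
    exact Subgroup.commutator_mono le_top le_top this
  have key : ∀ (k : ℕ) (g₀ : G ⧸ L), g₀⁻¹ * x ^ k * g₀ ∈ Gb → g₀⁻¹ * x ^ k * g₀ = x ^ k := by
    intro k g₀ _
    have hc : x ^ k * g₀ = g₀ * x ^ k := (Commute.pow_left (hcen g₀) k)
    calc g₀⁻¹ * x ^ k * g₀ = g₀⁻¹ * (x ^ k * g₀) := by group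
      _ = g₀⁻¹ * (g₀ * x ^ k) := by rw [hc]
      _ = x ^ k := by group
  have h2 := MonoidHom.transfer_eq_pow (Abelianization.of : Gb →* Abelianization Gb) x key
  rw [← hTdef, h1] at h2
  have h3 : (⟨x ^ Gb.index, _⟩ : Gb) ∈ commutator Gb := (QuotientGroup.eq_one_iff _).mp h2.symm
  have h4 : x ^ Gb.index ∈ (commutator Gb).map Gb.subtype := Subgroup.mem_map_of_mem _ h3
  rw [_root_.commutator_def, Subgroup.map_commutator, ← MonoidHom.range_eq_map,
    Subgroup.range_subtype, hGbdef, ← Subgroup.map_commutator] at h4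
  obtain ⟨c, hc, hceq⟩ := h4
  -- hceq : π c = x ^ Gb.index
  have h5 : π (c⁻¹ * g ^ Gb.index) = 1 := by
    rw [map_mul, map_inv, map_pow, ← hxdef, hceq, ← hGbdef]
    group
  have h6 : c⁻¹ * g ^ Gb.index ∈ L := (QuotientGroup.eq_one_iff _).mp h5
  have h7 : c ∈ N := by
    have : c = g ^ Gb.index * (c⁻¹ * g ^ Gb.index)⁻¹ := by group
    rw [this]
    exact mul_mem (pow_mem hgN _) (inv_mem (hLN h6))
  have h8 : c ∈ L := splitA N Λ s hs ⟨hc, h7⟩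
  have : g ^ Gb.index = c * (c⁻¹ * g ^ Gb.index) := by group
  rw [← hindex, this]
  exact mul_mem h8 h6

/-- If `N` is finitely generated and `1 → N → G → G/N → 1` virtually splits,
then `([G,G] ∩ N)/[G,N]` is finite. -/
theorem inter_quot_finite {G : Type*} [Group G]
    (N : Subgroup G) [hN : N.Normal] [Group.FG N]
    (Λ : Subgroup (G ⧸ N)) [Λ.FiniteIndex] (s : Λ →* G)
    (hs : ∀ l : Λ, QuotientGroup.mk' N (s l) = (l : G ⧸ N)) :
    Finite ((⁅(⊤ : Subgroup G), (⊤ : Subgroup G)⁆ ⊓ N : Subgroup G) ⧸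
      (⁅(⊤ : Subgroup G), N⁆.subgroupOf (⁅(⊤ : Subgroup G), (⊤ : Subgroup G)⁆ ⊓ N))) := by
  set L := ⁅(⊤ : Subgroup G), N⁆ with hLdef
  set K : Subgroup G := ⁅(⊤ : Subgroup G), (⊤ : Subgroup G)⁆ ⊓ N with hKdef
  have hLN : L ≤ N := Subgroup.commutator_le_right ⊤ N
  -- the target group and the ambient quotient
  letI instC : CommGroup (N ⧸ L.subgroupOf N) :=
    { (inferInstance : Group (N ⧸ L.subgroupOf N)) with
      mul_comm := by
        intro a b
        induction a using QuotientGroup.induction_on with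
        | H a =>
          induction b using QuotientGroup.induction_on with
          | H b =>
            rw [← QuotientGroup.mk_mul, ← QuotientGroup.mk_mul]
            apply Quotient.sound'
            rw [QuotientGroup.leftRel_apply]
            refine Subgroup.mem_subgroupOf.mpr ?_
            have : (((a * b)⁻¹ * (b * a) : N) : G) = ⁅(b : G)⁻¹, (a : G)⁻¹⁆ := by
              push_cast; group
            rw [this]
            exact Subgroup.commutator_mem_commutator (Subgroup.mem_top _) (N.inv_mem a.2) }
  -- the map from the target quotient into N ⧸ [G,N]
  have hinc : L.subgroupOf K ≤ (L.subgroupOf N).comap (Subgroup.inclusion inf_le_right) := by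
    intro x hx
    rw [Subgroup.mem_comap, Subgroup.mem_subgroupOf]
    rw [Subgroup.mem_subgroupOf] at hx
    simpa [Subgroup.coe_inclusion] using hx
  set φ : (K ⧸ L.subgroupOf K) →* (N ⧸ L.subgroupOf N) :=
    QuotientGroup.map _ _ (Subgroup.inclusion inf_le_right) hinc with hφdef
  have φinj : Function.Injective φ := by
    rw [injective_iff_map_eq_one]
    intro a ha
    induction a using QuotientGroup.induction_on with
    | H x =>
      rw [hφdef, QuotientGroup.map_mk] at ha
      have h1 : Subgroup.inclusion (inf_le_right (a := ⁅(⊤ : Subgroup G), (⊤ : Subgroup G)⁆)) x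
          ∈ L.subgroupOf N := (QuotientGroup.eq_one_iff _).mp ha
      rw [Subgroup.mem_subgroupOf] at h1
      refine (QuotientGroup.eq_one_iff _).mpr ?_
      rw [Subgroup.mem_subgroupOf]
      simpa [Subgroup.coe_inclusion] using h1
  -- torsion
  have hn : Λ.index ≠ 0 := Subgroup.FiniteIndex.index_ne_zero
  have htor : Monoid.IsTorsion (K ⧸ L.subgroupOf K) := by
    intro a
    induction a using QuotientGroup.induction_on with
    | H x =>
      refine isOfFinOrder_iff_pow_eq_one.mpr ⟨Λ.index, Nat.pos_of_ne_zero hn, ?_⟩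
      rw [← QuotientGroup.mk_pow]
      refine (QuotientGroup.eq_one_iff _).mpr ?_
      rw [Subgroup.mem_subgroupOf]
      have : ((x ^ Λ.index : K) : G) = (x : G) ^ Λ.index := by push_cast; rfl
      rw [this]
      exact powB N Λ s hs (x : G) x.2
  -- range of φ is finite
  set S := φ.range with hSdef
  haveI : Group.FG S := subgroup_fg_of_comm_fg S
  have htorS : Monoid.IsTorsion S :=
    IsTorsion.of_surjective φ.rangeRestrict_surjective htor
  haveI : Finite S := CommGroup.finite_of_fg_torsion S htorS
  exact Finite.of_injective φ.rangeRestrict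
    (fun a b h => φinj (congrArg Subtype.val h))
end

section
/- Let A and B be groups, G = A ∗ B their free product, q : A ∗ B → A × B the canonical surjection, and N = Ker(q). Then N/[G,N] is isomorphic as an abelian group to A^{ab} ⊗_ℤ B^{ab}, the tensor product of the abelianizations of A and B. -/
open scoped TensorProduct

noncomputable section

variable (A B : Type*) [Group A] [Group B]

/-- The canonical surjection `A ∗ B → A × B`. -/
def canonicalSurj : Monoid.Coprod A B →* A × B :=
  Monoid.Coprod.lift (MonoidHom.inl A B) (MonoidHom.inr A B)

namespace KQT

open Monoid Subgroup
open scoped commutatorElement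

variable {A B}

/-- Image of `a : A` in the additivized abelianization. -/
def abA (a : A) : Additive (Abelianization A) := Additive.ofMul (Abelianization.of a)

/-- Image of `b : B` in the additivized abelianization. -/
def abB (b : B) : Additive (Abelianization B) := Additive.ofMul (Abelianization.of b)

@[simp] lemma abA_one : abA (1 : A) = 0 := by simp [abA]
@[simp] lemma abB_one : abB (1 : B) = 0 := by simp [abB]
@[simp] lemma abA_mul (a a' : A) : abA (a * a') = abA a + abA a' := by simp [abA]
@[simp] lemma abB_mul (b b' : B) : abB (b * b') = abB b + abB b' := by simp [abB]
@[simp] lemma abA_inv (a : A) : abA a⁻¹ = -abA a := by simp [abA]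
@[simp] lemma abB_inv (b : B) : abB b⁻¹ = -abB b := by simp [abB]

variable (A B) in
/-- The central extension of `A × B` by `A^{ab} ⊗ B^{ab}` with cocycle `(x,y) ↦ x.a ⊗ y.b`. -/
structure W where
  a : A
  b : B
  t : Additive (Abelianization A) ⊗[ℤ] Additive (Abelianization B)

namespace W

instance : Mul (W A B) :=
  ⟨fun x y => ⟨x.a * y.a, x.b * y.b, x.t + y.t + abA x.a ⊗ₜ[ℤ] abB y.b⟩⟩

instance : One (W A B) := ⟨⟨1, 1, 0⟩⟩

instance : Inv (W A B) :=
  ⟨fun x => ⟨x.a⁻¹, x.b⁻¹, -x.t + abA x.a ⊗ₜ[ℤ] abB x.b⟩⟩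

@[simp] lemma mul_def (x y : W A B) :
    x * y = ⟨x.a * y.a, x.b * y.b, x.t + y.t + abA x.a ⊗ₜ[ℤ] abB y.b⟩ := rfl

@[simp] lemma one_def : (1 : W A B) = ⟨1, 1, 0⟩ := rfl

@[simp] lemma inv_def (x : W A B) :
    x⁻¹ = ⟨x.a⁻¹, x.b⁻¹, -x.t + abA x.a ⊗ₜ[ℤ] abB x.b⟩ := rfl

instance : Group (W A B) where
  mul_assoc x y z := by
    simp only [mul_def, W.mk.injEq, abA_mul, abB_mul, TensorProduct.add_tmul,
      TensorProduct.tmul_add]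
    refine ⟨mul_assoc _ _ _, mul_assoc _ _ _, by abel⟩
  one_mul x := by simp
  mul_one x := by simp
  inv_mul_cancel x := by
    simp only [inv_def, mul_def, abA_inv, TensorProduct.neg_tmul, one_def, W.mk.injEq]
    refine ⟨inv_mul_cancel _, inv_mul_cancel _, by abel⟩

end W

variable (A B) in
/-- Embedding of `A` into `W`. -/
def inWA : A →* W A B where
  toFun a := ⟨a, 1, 0⟩
  map_one' := rfl
  map_mul' a a' := by simp

variable (A B) in
/-- Embedding of `B` into `W`. -/
def inWB : B →* W A B where
  toFun b := ⟨1, b, 0⟩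
  map_one' := rfl
  map_mul' b b' := by simp

variable (A B) in
/-- The homomorphism `A ∗ B → W`. -/
def Phi : Monoid.Coprod A B →* W A B := Monoid.Coprod.lift (inWA A B) (inWB A B)

variable (A B) in
/-- Projection `W → A × B`. -/
def piW : W A B →* A × B where
  toFun x := (x.a, x.b)
  map_one' := rfl
  map_mul' x y := rfl

lemma piW_comp_Phi : (piW A B).comp (Phi A B) = canonicalSurj A B := by
  apply Monoid.Coprod.hom_ext <;> rfl

lemma Phi_fst (n : Monoid.Coprod A B) (hn : n ∈ (canonicalSurj A B).ker) :
    (Phi A B n).a = 1 := by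
  have : (piW A B) (Phi A B n) = canonicalSurj A B n := by
    rw [← piW_comp_Phi]; rfl
  have h1 : canonicalSurj A B n = 1 := hn
  rw [h1] at this
  exact congrArg Prod.fst this

lemma Phi_snd (n : Monoid.Coprod A B) (hn : n ∈ (canonicalSurj A B).ker) :
    (Phi A B n).b = 1 := by
  have : (piW A B) (Phi A B n) = canonicalSurj A B n := by
    rw [← piW_comp_Phi]; rfl
  have h1 : canonicalSurj A B n = 1 := hn
  rw [h1] at this
  exact congrArg Prod.snd this

lemma central_mem (t) (w : W A B) : (⟨1, 1, t⟩ : W A B) * w = w * ⟨1, 1, t⟩ := by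
  simp [add_comm]

/-- The "third coordinate" homomorphism on the kernel. -/
def chi : (canonicalSurj A B).ker →*
    Multiplicative (Additive (Abelianization A) ⊗[ℤ] Additive (Abelianization B)) where
  toFun n := Multiplicative.ofAdd (Phi A B n.1).t
  map_one' := by
    have : Phi A B (1 : Monoid.Coprod A B) = 1 := map_one _
    simp [this]
  map_mul' n m := by
    have hco : ((n * m : (canonicalSurj A B).ker) : Monoid.Coprod A B) = n.1 * m.1 := rfl
    have h : Phi A B (n.1 * m.1) = Phi A B n.1 * Phi A B m.1 := map_mul _ _ _
    have ha : (Phi A B n.1).a = 1 := Phi_fst _ n.2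
    show Multiplicative.ofAdd (Phi A B ((n * m : (canonicalSurj A B).ker) :
      Monoid.Coprod A B)).t = _
    rw [hco, h]
    show Multiplicative.ofAdd ((Phi A B n.1).t + (Phi A B m.1).t
      + abA (Phi A B n.1).a ⊗ₜ[ℤ] abB (Phi A B m.1).b) = _
    rw [ha, abA_one, TensorProduct.zero_tmul, add_zero]
    rfl

lemma Phi_ker_central (n : Monoid.Coprod A B) (hn : n ∈ (canonicalSurj A B).ker)
    (w : W A B) : Commute w (Phi A B n) := by
  have ha : (Phi A B n).a = 1 := Phi_fst _ hn
  have hb : (Phi A B n).b = 1 := Phi_snd _ hn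
  have : Phi A B n = ⟨1, 1, (Phi A B n).t⟩ := by
    cases h : Phi A B n
    simp_all
  rw [this]
  exact (central_mem _ _).symm

lemma comm_le_ker_Phi :
    ⁅(⊤ : Subgroup (Monoid.Coprod A B)), (canonicalSurj A B).ker⁆ ≤ (Phi A B).ker := by
  rw [Subgroup.commutator_le]
  intro g _ n hn
  rw [MonoidHom.mem_ker, map_commutatorElement]
  exact commutatorElement_eq_one_iff_commute.mpr (Phi_ker_central n hn _)

/-- Abbreviation for the subgroup `[G,N]` sitting inside `N`. -/
abbrev HH := (⁅(⊤ : Subgroup (Monoid.Coprod A B)), (canonicalSurj A B).ker⁆.subgroupOf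
  (canonicalSurj A B).ker)

lemma HH_le_ker_chi : (HH (A := A) (B := B)) ≤ (chi (A := A) (B := B)).ker := by
  intro x hx
  rw [Subgroup.mem_subgroupOf] at hx
  have : Phi A B x.1 = 1 := comm_le_ker_Phi hx
  simp only [MonoidHom.mem_ker, chi, MonoidHom.coe_mk, OneHom.coe_mk, this]
  rfl

/-- The induced map on the quotient `N/[G,N]`. -/
def chibar : ((canonicalSurj A B).ker ⧸ HH (A := A) (B := B)) →*
    Multiplicative (Additive (Abelianization A) ⊗[ℤ] Additive (Abelianization B)) :=
  QuotientGroup.lift _ chi HH_le_ker_chi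

section Reverse

/-- The commutator `[inl a, inr b]` lies in the kernel. -/
lemma comm_mem_ker (a : A) (b : B) :
    ⁅Coprod.inl (M := A) (N := B) a, Coprod.inr (M := A) (N := B) b⁆ ∈ (canonicalSurj A B).ker := by
  rw [MonoidHom.mem_ker, map_commutatorElement]
  have h1 : canonicalSurj A B (Coprod.inl (M := A) (N := B) a) = (a, 1) := rfl
  have h2 : canonicalSurj A B (Coprod.inr b) = (1, b) := rfl
  rw [h1, h2, commutatorElement_def]
  ext <;> simp

/-- The canonical commutator element of the kernel. -/
def commN (a : A) (b : B) : (canonicalSurj A B).ker :=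
  ⟨⁅Coprod.inl (M := A) (N := B) a, Coprod.inr (M := A) (N := B) b⁆, comm_mem_ker a b⟩

instance : CommGroup ((canonicalSurj A B).ker ⧸ HH (A := A) (B := B)) :=
  { (inferInstance : Group _) with
    mul_comm := by
      intro x y
      induction x using QuotientGroup.induction_on with
      | H a =>
      induction y using QuotientGroup.induction_on with
      | H b =>
      show QuotientGroup.mk (a * b) = QuotientGroup.mk (b * a)
      rw [QuotientGroup.eq]
      rw [Subgroup.mem_subgroupOf]
      have : ((a * b)⁻¹ * (b * a) : (canonicalSurj A B).ker).1
          = ⁅(b.1)⁻¹, (a.1)⁻¹⁆ := by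
        simp [commutatorElement_def, mul_assoc]
      rw [this]
      exact Subgroup.commutator_mem_commutator (Subgroup.mem_top _) (inv_mem a.2) }

/-- Conjugation acts trivially on `N/[G,N]`. -/
lemma conj_mk (g : Monoid.Coprod A B) (n m : (canonicalSurj A B).ker)
    (h : g * n.1 * g⁻¹ = m.1) :
    (QuotientGroup.mk m : (canonicalSurj A B).ker ⧸ HH (A := A) (B := B))
      = QuotientGroup.mk n := by
  rw [QuotientGroup.eq, Subgroup.mem_subgroupOf]
  have : ((m⁻¹ * n : (canonicalSurj A B).ker) : Monoid.Coprod A B) = ⁅g, (n.1)⁻¹⁆ := by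
    rw [Subgroup.coe_mul, Subgroup.coe_inv, ← h, commutatorElement_def]
    group
  rw [this]
  exact Subgroup.commutator_mem_commutator (Subgroup.mem_top _) (inv_mem n.2)

/-- `[inl a, inr b]` mod `[G,N]`. -/
def commQ (a : A) (b : B) : (canonicalSurj A B).ker ⧸ HH (A := A) (B := B) :=
  QuotientGroup.mk (commN a b)

lemma commQ_mul_left (a a' : A) (b : B) :
    commQ (a * a') b = commQ a b * commQ a' b := by
  classical
  set x := Coprod.inl (M := A) (N := B) a
  set y := Coprod.inl (M := A) (N := B) a'
  set z := Coprod.inr (M := A) (N := B) b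
  have hmem : x * ⁅y, z⁆ * x⁻¹ ∈ (canonicalSurj A B).ker :=
    Subgroup.Normal.conj_mem inferInstance _ (comm_mem_ker a' b) x
  have key : commN (a * a') b = (⟨x * ⁅y, z⁆ * x⁻¹, hmem⟩ : (canonicalSurj A B).ker)
      * commN a b := by
    apply Subtype.ext
    show ⁅Coprod.inl (M := A) (N := B) (a * a'), z⁆ = x * ⁅y, z⁆ * x⁻¹ * ⁅x, z⁆
    rw [show Coprod.inl (M := A) (N := B) (a * a') = x * y from map_mul _ _ _]
    simp only [commutatorElement_def]
    group
  rw [commQ, key]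
  rw [QuotientGroup.mk_mul]
  rw [conj_mk x (commN a' b) ⟨x * ⁅y, z⁆ * x⁻¹, hmem⟩ rfl]
  rw [mul_comm]
  rfl

lemma commQ_mul_right (a : A) (b b' : B) :
    commQ a (b * b') = commQ a b * commQ a b' := by
  classical
  set x := Coprod.inl (M := A) (N := B) a
  set y := Coprod.inr (M := A) (N := B) b
  set z := Coprod.inr (M := A) (N := B) b'
  have hmem : y * ⁅x, z⁆ * y⁻¹ ∈ (canonicalSurj A B).ker :=
    Subgroup.Normal.conj_mem inferInstance _ (comm_mem_ker a b') y
  have key : commN a (b * b') = commN a b *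
      (⟨y * ⁅x, z⁆ * y⁻¹, hmem⟩ : (canonicalSurj A B).ker) := by
    apply Subtype.ext
    show ⁅x, Coprod.inr (M := A) (N := B) (b * b')⁆ = ⁅x, y⁆ * (y * ⁅x, z⁆ * y⁻¹)
    rw [show Coprod.inr (M := A) (N := B) (b * b') = y * z from map_mul _ _ _]
    simp only [commutatorElement_def]
    group
  rw [commQ, key, QuotientGroup.mk_mul, conj_mk y (commN a b') ⟨y * ⁅x, z⁆ * y⁻¹, hmem⟩ rfl]
  rfl

/-- For fixed `b`, the map `a ↦ [a,b]` is a homomorphism into the quotient. -/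
def fb (b : B) : A →* ((canonicalSurj A B).ker ⧸ HH (A := A) (B := B)) :=
  MonoidHom.mk' (fun a => commQ a b) (fun a a' => commQ_mul_left a a' b)

/-- Lift of `fb` to the abelianization of `A`. -/
def fAb (b : B) : Abelianization A →* ((canonicalSurj A B).ker ⧸ HH (A := A) (B := B)) :=
  Abelianization.lift (fb b)

lemma fAb_mul (b b' : B) : fAb (A := A) (b * b') = fAb b * fAb b' := by
  apply Abelianization.hom_ext
  ext a
  simp only [MonoidHom.comp_apply, MonoidHom.mul_apply, fAb, Abelianization.lift_apply_of]
  exact commQ_mul_right a b b'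

/-- The two-variable homomorphism. -/
def F : B →* (Abelianization A →* ((canonicalSurj A B).ker ⧸ HH (A := A) (B := B))) :=
  MonoidHom.mk' fAb fAb_mul

/-- Lift of `F` to the abelianization of `B`. -/
def Fab : Abelianization B →*
    (Abelianization A →* ((canonicalSurj A B).ker ⧸ HH (A := A) (B := B))) :=
  Abelianization.lift F

/-- The bilinear map over ℤ. -/
def bil0 : Additive (Abelianization A) →+ (Additive (Abelianization B) →+
    Additive ((canonicalSurj A B).ker ⧸ HH (A := A) (B := B))) :=
  AddMonoidHom.mk'
    (fun x => AddMonoidHom.mk'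
      (fun y => Additive.ofMul (Fab y.toMul x.toMul))
      (by
        intro y y'
        show Additive.ofMul (Fab (y.toMul * y'.toMul) x.toMul) = _
        rw [map_mul, MonoidHom.mul_apply]
        rfl))
    (by
      intro x x'
      refine AddMonoidHom.ext fun y => ?_
      show Additive.ofMul (Fab y.toMul (x.toMul * x'.toMul)) = _
      rw [map_mul]
      rfl)

/-- The bilinear map as a ℤ-linear map. -/
def bilin : Additive (Abelianization A) →ₗ[ℤ] (Additive (Abelianization B) →ₗ[ℤ]
    Additive ((canonicalSurj A B).ker ⧸ HH (A := A) (B := B))) where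
  toFun x := (bil0 x).toIntLinearMap
  map_add' x x' := by ext y; simp
  map_smul' n x := by
    ext y
    simp only [AddMonoidHom.toIntLinearMap, map_zsmul, LinearMap.coe_mk, AddHom.coe_mk,
      RingHom.id_apply, LinearMap.smul_apply, AddMonoidHom.smul_apply]

/-- The map `A^{ab} ⊗ B^{ab} → N/[G,N]`. -/
def psiL : (Additive (Abelianization A) ⊗[ℤ] Additive (Abelianization B)) →ₗ[ℤ]
    Additive ((canonicalSurj A B).ker ⧸ HH (A := A) (B := B)) :=
  TensorProduct.lift bilin

/-- The multiplicative version. -/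
def psi' : Multiplicative (Additive (Abelianization A) ⊗[ℤ] Additive (Abelianization B)) →*
    ((canonicalSurj A B).ker ⧸ HH (A := A) (B := B)) :=
  AddMonoidHom.toMultiplicativeLeft psiL.toAddMonoidHom

lemma psiL_tmul (a : A) (b : B) :
    psiL (abA a ⊗ₜ[ℤ] abB b) = Additive.ofMul (commQ a b) := by
  simp only [psiL, TensorProduct.lift.tmul]
  show Additive.ofMul (Fab (Abelianization.of b) (Abelianization.of a)) = _
  rw [show (Fab (Abelianization.of b) : Abelianization A →*
      ((canonicalSurj A B).ker ⧸ HH (A := A) (B := B))) = F b from Abelianization.lift_apply_of _ _]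
  show Additive.ofMul (fAb b (Abelianization.of a)) = _
  rw [show fAb b (Abelianization.of a) = fb b a from Abelianization.lift_apply_of _ _]
  rfl

end Reverse

section Computations

lemma Phi_inl (a : A) : Phi A B (Coprod.inl (M := A) (N := B) a) = ⟨a, 1, 0⟩ :=
  Monoid.Coprod.lift_apply_inl _ _ _

lemma Phi_inr (b : B) : Phi A B (Coprod.inr b) = ⟨1, b, 0⟩ :=
  Monoid.Coprod.lift_apply_inr _ _ _

lemma Phi_comm (a : A) (b : B) :
    Phi A B ⁅Coprod.inl (M := A) (N := B) a, Coprod.inr (M := A) (N := B) b⁆ = ⟨1, 1, abA a ⊗ₜ[ℤ] abB b⟩ := by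
  rw [map_commutatorElement, Phi_inl, Phi_inr, commutatorElement_def]
  simp only [W.mul_def, W.inv_def, abA_one, abB_one, abA_mul, abB_mul, abA_inv, abB_inv,
    TensorProduct.zero_tmul, TensorProduct.tmul_zero, TensorProduct.neg_tmul,
    TensorProduct.tmul_neg, one_mul, mul_one, add_zero, zero_add, neg_zero, inv_one]
  rw [W.mk.injEq]
  refine ⟨by group, by group, by simp⟩

lemma chi_commN (a : A) (b : B) :
    chi (commN a b) = Multiplicative.ofAdd (abA a ⊗ₜ[ℤ] abB b) := by
  show Multiplicative.ofAdd (Phi A B ⁅Coprod.inl (M := A) (N := B) a, Coprod.inr (M := A) (N := B) b⁆).t = _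
  rw [Phi_comm]

lemma chibar_commQ (a : A) (b : B) :
    chibar (commQ a b) = Multiplicative.ofAdd (abA a ⊗ₜ[ℤ] abB b) :=
  chi_commN a b

lemma psi'_chibar_commQ (a : A) (b : B) :
    psi' (chibar (commQ a b)) = commQ a b := by
  rw [chibar_commQ]
  show (psiL (abA a ⊗ₜ[ℤ] abB b)).toMul = _
  rw [psiL_tmul]
  rfl

end Computations

section Generation

/-- The generating set of commutators. -/
def S : Set (Monoid.Coprod A B) :=
  {x | ∃ (a : A) (b : B), ⁅Coprod.inl (M := A) (N := B) a, Coprod.inr (M := A) (N := B) b⁆ = x}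

lemma S_subset_ker : S (A := A) (B := B) ⊆ (canonicalSurj A B).ker := by
  rintro x ⟨a, b, rfl⟩
  exact comm_mem_ker a b

lemma ker_eq_normalClosure :
    (canonicalSurj A B).ker = Subgroup.normalClosure (S (A := A) (B := B)) := by
  refine le_antisymm ?_ (Subgroup.normalClosure_le_normal S_subset_ker)
  intro n hn
  set M := Subgroup.normalClosure (S (A := A) (B := B)) with hM
  have hcomm : ∀ (a : A) (b : B),
      Commute ((QuotientGroup.mk' M) (Coprod.inl (M := A) (N := B) a)) ((QuotientGroup.mk' M) (Coprod.inr b)) := by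
    intro a b
    rw [Commute, SemiconjBy, ← map_mul, ← map_mul]
    rw [QuotientGroup.mk'_eq_mk', ]
    refine ⟨⁅Coprod.inr (M := A) (N := B) b⁻¹, Coprod.inl (M := A) (N := B) a⁻¹⁆, ?_, ?_⟩
    · have h1 : ⁅Coprod.inl (M := A) (N := B) a⁻¹, Coprod.inr (M := A) (N := B) b⁻¹⁆ ∈ M :=
        Subgroup.subset_normalClosure ⟨a⁻¹, b⁻¹, rfl⟩
      have h2 := (inv_mem h1 : (⁅Coprod.inl (M := A) (N := B) a⁻¹, Coprod.inr (M := A) (N := B) b⁻¹⁆)⁻¹ ∈ M)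
      rwa [commutatorElement_inv] at h2
    · simp only [commutatorElement_def, map_inv]
      group
  let r : A × B →* (Monoid.Coprod A B) ⧸ M :=
    MonoidHom.noncommCoprod ((QuotientGroup.mk' M).comp Coprod.inl)
      ((QuotientGroup.mk' M).comp Coprod.inr) hcomm
  have key : r.comp (canonicalSurj A B) = QuotientGroup.mk' M := by
    apply Monoid.Coprod.hom_ext
    · ext a
      show r (canonicalSurj A B (Coprod.inl (M := A) (N := B) a)) = QuotientGroup.mk' M (Coprod.inl (M := A) (N := B) a)
      have : canonicalSurj A B (Coprod.inl (M := A) (N := B) a) = (a, 1) := rfl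
      rw [this]
      show QuotientGroup.mk' M (Coprod.inl (M := A) (N := B) a) * QuotientGroup.mk' M (Coprod.inr 1) = _
      simp
    · ext b
      show r (canonicalSurj A B (Coprod.inr b)) = QuotientGroup.mk' M (Coprod.inr b)
      have : canonicalSurj A B (Coprod.inr b) = (1, b) := rfl
      rw [this]
      show QuotientGroup.mk' M (Coprod.inl 1) * QuotientGroup.mk' M (Coprod.inr b) = _
      simp
  have : QuotientGroup.mk' M n = 1 := by
    rw [← key]
    show r (canonicalSurj A B n) = 1
    rw [show canonicalSurj A B n = 1 from hn, map_one]
  rwa [← QuotientGroup.ker_mk' M, MonoidHom.mem_ker]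

end Generation

lemma psi'_comp_chibar :
    (psi' (A := A) (B := B)).comp chibar = MonoidHom.id _ := by
  apply QuotientGroup.monoidHom_ext
  set f := ((psi' (A := A) (B := B)).comp chibar).comp
    (QuotientGroup.mk' (HH (A := A) (B := B))) with hf
  set g := (MonoidHom.id _).comp (QuotientGroup.mk' (HH (A := A) (B := B))) with hg
  show f = g
  have main : ∀ n : (canonicalSurj A B).ker, n ∈ f.eqLocus g := by
    have hclos : Subgroup.normalClosure (S (A := A) (B := B)) ≤ Subgroup.map
        ((canonicalSurj A B).ker.subtype) (f.eqLocus g) := by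
      refine (Subgroup.closure_le _).mpr ?_
      rintro x hx
      rw [Group.mem_conjugatesOfSet_iff] at hx
      obtain ⟨y, ⟨a, b, rfl⟩, hconj⟩ := hx
      obtain ⟨c, hc⟩ := isConj_iff.mp hconj
      have hxker : x ∈ (canonicalSurj A B).ker := by
        rw [← hc]
        exact Subgroup.Normal.conj_mem inferInstance _ (comm_mem_ker a b) c
      refine ⟨⟨x, hxker⟩, ?_, rfl⟩
      show f ⟨x, hxker⟩ = g ⟨x, hxker⟩
      have hmk : (QuotientGroup.mk (⟨x, hxker⟩ : (canonicalSurj A B).ker) :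
          (canonicalSurj A B).ker ⧸ HH (A := A) (B := B)) = commQ a b :=
        conj_mk c (commN a b) ⟨x, hxker⟩ hc
      show psi' (chibar (QuotientGroup.mk _)) = QuotientGroup.mk _
      rw [hmk]
      exact psi'_chibar_commQ a b
    have hsub : ∀ x, x ∈ (canonicalSurj A B).ker → x ∈ Subgroup.map
        ((canonicalSurj A B).ker.subtype) (f.eqLocus g) := fun x hx =>
      hclos (ker_eq_normalClosure (A := A) (B := B) ▸ hx)
    intro n
    obtain ⟨m, hm, hmn⟩ := hsub n.1 n.2
    have : m = n := Subtype.ext hmn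
    rwa [this] at hm
  ext n
  exact main n

lemma chibar_comp_psi' :
    (chibar (A := A) (B := B)).comp psi' = MonoidHom.id _ := by
  have hL : (MonoidHom.toAdditiveLeft (chibar (A := A) (B := B))).toIntLinearMap.comp psiL
      = LinearMap.id := by
    apply TensorProduct.ext'
    intro x y
    induction x using QuotientGroup.induction_on with
    | H a =>
    induction y using QuotientGroup.induction_on with
    | H b =>
    show (MonoidHom.toAdditiveLeft chibar) (psiL (abA a ⊗ₜ[ℤ] abB b)) = abA a ⊗ₜ[ℤ] abB b
    rw [psiL_tmul]
    show Multiplicative.toAdd (chibar (commQ a b)) = _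
    rw [chibar_commQ]
    rfl
  refine MonoidHom.ext fun t => ?_
  have := congrArg (fun (L : _ →ₗ[ℤ] _) => L t.toAdd) hL
  exact (by simpa using congrArg Multiplicative.ofAdd this :
    chibar (Additive.toMul (psiL (Multiplicative.toAdd t))) = t)

end KQT

/-- For `G = A ∗ B` and `N = Ker(A ∗ B → A × B)`, the quotient `N/[G,N]` is
isomorphic to `A^{ab} ⊗_ℤ B^{ab}` as an abelian group. -/
theorem ker_quot_iso_tensor :
    Nonempty (Additive ((canonicalSurj A B).ker ⧸
        (⁅(⊤ : Subgroup (Monoid.Coprod A B)), (canonicalSurj A B).ker⁆.subgroupOf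
          (canonicalSurj A B).ker)) ≃+
      (Additive (Abelianization A) ⊗[ℤ] Additive (Abelianization B))) :=
  ⟨MulEquiv.toAdditiveLeft
    (MonoidHom.toMulEquiv KQT.chibar KQT.psi' KQT.psi'_comp_chibar KQT.chibar_comp_psi')⟩
end
end

section
/- Let F₂ = ⟨a,b⟩ be the free group of rank 2 and let G = F₂ ⋊ (ℤ/2ℤ) where the nontrivial element τ acts by swapping a and b. Set N = F₂ (as a normal subgroup of G) and x = [a,b]. Then every G-invariant homogeneous quasimorphism f on N satisfies f(x) = 0, and consequently scl_{G,N}(x) = 0; on the other hand scl_N(x) = 1/2 > 0. Hence scl_{G,N} and scl_N are not equivalent on [N,N]. -/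
open Filter Topology
open scoped commutatorElement

variable {G : Type*} [Group G]

/-- The stable `(G,N)`-commutator length (the limit exists, so it equals this limsup). -/
noncomputable def sclGN (N : Subgroup G) (x : G) : ℝ :=
  Filter.limsup (fun n : ℕ => (clGN N (x ^ n) : ℝ) / n) Filter.atTop

/-! ### Auxiliary material -/

section TransNumber

open CircleDeg1Lift hiding translate

noncomputable abbrev trN (f : CircleDeg1Lift) : ℝ := f.translationNumber
noncomputable abbrev Tr (r : ℝ) : CircleDeg1Liftˣ :=
  CircleDeg1Lift.translate (Multiplicative.ofAdd r)

theorem trN_mul_le (f g : CircleDeg1Lift) : trN (f * g) ≤ trN f + trN g + 1 := by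
  set k : ℤ := ⌊trN g⌋ + 1 with hk
  have hT : ∀ x, g x ≤ x + (k:ℝ) := by
    intro x
    have := g.map_lt_add_floor_translationNumber_add_one x
    push_cast [hk]
    linarith
  have hle : f * g ≤ ↑(Tr (k:ℝ)) * f := by
    intro x
    show f (g x) ≤ _
    calc f (g x) ≤ f (x + (k:ℝ)) := f.mono (hT x)
      _ = f x + (k:ℝ) := by exact_mod_cast f.map_add_int x k
      _ = (↑(Tr (k:ℝ)) * f) x := by
            simp [CircleDeg1Lift.mul_apply, CircleDeg1Lift.translate_apply]; ring
  have hc : Commute (↑(Tr (k:ℝ)) : CircleDeg1Lift) f := by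
    rw [commute_iff_commute]
    intro x
    simp only [Function.comp_apply, CircleDeg1Lift.mul_apply, CircleDeg1Lift.translate_apply]
    exact (f.map_int_add k x).symm
  calc trN (f * g) ≤ trN (↑(Tr (k:ℝ)) * f) := translationNumber_mono hle
    _ = trN (↑(Tr (k:ℝ)) : CircleDeg1Lift) + trN f := translationNumber_mul_of_commute hc
    _ = (k:ℝ) + trN f := by
          rw [show trN ↑(Tr (k:ℝ)) = (k:ℝ) from CircleDeg1Lift.translationNumber_translate (k:ℝ)]
    _ ≤ trN f + trN g + 1 := by
        have : ((⌊trN g⌋:ℝ)) ≤ trN g := Int.floor_le _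
        push_cast [hk]; linarith

theorem trN_comm_le (u v : CircleDeg1Liftˣ) : trN ↑(u * v * u⁻¹ * v⁻¹) ≤ 1 := by
  have h1 : ((u * v * u⁻¹ * v⁻¹ : CircleDeg1Liftˣ) : CircleDeg1Lift)
      = (↑(u * v * u⁻¹ : CircleDeg1Liftˣ) : CircleDeg1Lift) * ↑(v⁻¹ : CircleDeg1Liftˣ) := by
    push_cast
    ring
  rw [h1]
  have h2 := trN_mul_le (↑(u * v * u⁻¹ : CircleDeg1Liftˣ)) ↑(v⁻¹ : CircleDeg1Liftˣ)
  have h3 : trN ↑(u * v * u⁻¹ : CircleDeg1Liftˣ) = trN ↑v := by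
    have : ((u * v * u⁻¹ : CircleDeg1Liftˣ) : CircleDeg1Lift)
        = ↑u * ↑v * ↑(u⁻¹ : CircleDeg1Liftˣ) := by push_cast; ring
    rw [this]
    exact CircleDeg1Lift.translationNumber_conj_eq u ↑v
  have h4 : trN ↑(v⁻¹ : CircleDeg1Liftˣ) = - trN ↑v := translationNumber_units_inv v
  rw [h3, h4] at h2
  linarith

theorem trN_prod_le (l : List CircleDeg1Liftˣ)
    (h : ∀ w ∈ l, ∃ u v : CircleDeg1Liftˣ, w = u * v * u⁻¹ * v⁻¹) :
    trN ↑l.prod ≤ 2 * l.length := by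
  induction l with
  | nil => simp
  | cons w l ih =>
    have hw := h w (List.mem_cons_self)
    obtain ⟨u, v, rfl⟩ := hw
    have h2 : ((( u * v * u⁻¹ * v⁻¹) * l.prod : CircleDeg1Liftˣ) : CircleDeg1Lift)
        = ↑(u * v * u⁻¹ * v⁻¹ : CircleDeg1Liftˣ) * ↑l.prod := by push_cast; ring
    rw [List.prod_cons, h2]
    have := trN_mul_le (↑(u * v * u⁻¹ * v⁻¹ : CircleDeg1Liftˣ)) ↑l.prod
    have hc := trN_comm_le u v
    have hl := ih (fun w hw => h w (List.mem_cons_of_mem _ hw))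
    simp only [List.length_cons]
    push_cast at this hc hl ⊢
    linarith

end TransNumber

section PLmaps

open CircleDeg1Lift hiding translate

noncomputable def phiF (t : ℝ) : ℝ :=
  if t ≤ 1/2 then t/3 + 1/12 else if t ≤ 3/4 then 3*t - 5/4 else t/3 + 3/4
noncomputable def psiF (u : ℝ) : ℝ :=
  if u ≤ 1/6 then 3*u else if u ≤ 11/12 then u/3 + 4/9 else 3*u - 2

lemma phiF_mono : Monotone phiF := by
  intro t s h; unfold phiF; split_ifs <;> linarith
lemma psiF_mono : Monotone psiF := by
  intro t s h; unfold psiF; split_ifs <;> linarith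
lemma phiF_lb {t : ℝ} (h : 0 ≤ t) : 1/12 ≤ phiF t := by unfold phiF; split_ifs <;> linarith
lemma phiF_ub {t : ℝ} (h : t < 1) : phiF t < 13/12 := by unfold phiF; split_ifs <;> linarith
lemma psiF_lb {t : ℝ} (h : 0 ≤ t) : 0 ≤ psiF t := by unfold psiF; split_ifs <;> linarith
lemma psiF_ub {t : ℝ} (h : t < 1) : psiF t < 1 := by unfold psiF; split_ifs <;> linarith
lemma psiF_phiF {t : ℝ} (h0 : 0 ≤ t) (h1 : t < 1) : psiF (phiF t - 1/12) = t := by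
  unfold phiF psiF; split_ifs <;> linarith
lemma phiF_psiF {u : ℝ} (h0 : 0 ≤ u) (h1 : u < 1) : phiF (psiF u) = u + 1/12 := by
  unfold phiF psiF; split_ifs <;> linarith

noncomputable def Sfun (x : ℝ) : ℝ := ⌊x⌋ + phiF (Int.fract x)
noncomputable def Sifun (x : ℝ) : ℝ := ⌊x - 1/12⌋ + psiF (Int.fract (x - 1/12))

lemma Sfun_mono : Monotone Sfun := by
  intro x y h
  rcases eq_or_lt_of_le (Int.floor_le_floor h) with hf | hf
  · unfold Sfun; rw [← hf]
    have : Int.fract x ≤ Int.fract y := by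
      unfold Int.fract; rw [← hf]; linarith
    have := phiF_mono this
    linarith
  · unfold Sfun
    have h1 : phiF (Int.fract x) < 13/12 := phiF_ub (Int.fract_lt_one x)
    have h2 : (1:ℝ)/12 ≤ phiF (Int.fract y) := phiF_lb (Int.fract_nonneg y)
    have : (⌊x⌋:ℝ) + 1 ≤ (⌊y⌋:ℝ) := by exact_mod_cast Int.add_one_le_of_lt hf
    linarith

lemma Sifun_mono : Monotone Sifun := by
  intro x y h
  have h' : x - 1/12 ≤ y - 1/12 := by linarith
  rcases eq_or_lt_of_le (Int.floor_le_floor h') with hf | hf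
  · unfold Sifun; rw [← hf]
    have : Int.fract (x - 1/12) ≤ Int.fract (y - 1/12) := by
      unfold Int.fract; rw [← hf]; linarith
    have := psiF_mono this
    linarith
  · unfold Sifun
    have h1 : psiF (Int.fract (x - 1/12)) < 1 := psiF_ub (Int.fract_lt_one _)
    have h2 : (0:ℝ) ≤ psiF (Int.fract (y - 1/12)) := psiF_lb (Int.fract_nonneg _)
    have : (⌊x - 1/12⌋:ℝ) + 1 ≤ (⌊y - 1/12⌋:ℝ) := by exact_mod_cast Int.add_one_le_of_lt hf
    linarith

noncomputable def Slift : CircleDeg1Lift :=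
  ⟨⟨Sfun, Sfun_mono⟩, by
    intro x
    show Sfun (x+1) = Sfun x + 1
    unfold Sfun
    rw [Int.fract_add_one, Int.floor_add_one]
    push_cast; ring⟩

noncomputable def Silift : CircleDeg1Lift :=
  ⟨⟨Sifun, Sifun_mono⟩, by
    intro x
    show Sifun (x+1) = Sifun x + 1
    unfold Sifun
    have : x + 1 - 1/12 = (x - 1/12) + 1 := by ring
    rw [this, Int.fract_add_one, Int.floor_add_one]
    push_cast; ring⟩

lemma floor_shift (m : ℤ) (r : ℝ) (h0 : 0 ≤ r) (h1 : r < 1) : ⌊(m:ℝ) + r⌋ = m := by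
  rw [Int.floor_intCast_add, Int.floor_eq_zero_iff.mpr ⟨h0, h1⟩, add_zero]

lemma fract_shift (m : ℤ) (r : ℝ) (h0 : 0 ≤ r) (h1 : r < 1) : Int.fract ((m:ℝ) + r) = r := by
  rw [Int.fract_intCast_add, Int.fract_eq_self.mpr ⟨h0, h1⟩]

lemma Sfun_Sifun (x : ℝ) : Sfun (Sifun x) = x := by
  have h0 := Int.fract_nonneg (x - 1/12)
  have h1 := Int.fract_lt_one (x - 1/12)
  have p0 : 0 ≤ psiF (Int.fract (x - 1/12)) := psiF_lb h0
  have p1 : psiF (Int.fract (x - 1/12)) < 1 := psiF_ub h1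
  unfold Sfun Sifun
  rw [floor_shift _ _ p0 p1, fract_shift _ _ p0 p1, phiF_psiF h0 h1]
  have := Int.floor_add_fract (x - 1/12)
  linarith

lemma Sifun_Sfun (x : ℝ) : Sifun (Sfun x) = x := by
  have h0 := Int.fract_nonneg x
  have h1 := Int.fract_lt_one x
  have p0 : (1:ℝ)/12 ≤ phiF (Int.fract x) := phiF_lb h0
  have p1 : phiF (Int.fract x) < 13/12 := phiF_ub h1
  unfold Sfun Sifun
  have e : (⌊x⌋:ℝ) + phiF (Int.fract x) - 1/12 = (⌊x⌋:ℝ) + (phiF (Int.fract x) - 1/12) := by ring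
  rw [e, floor_shift _ _ (by linarith) (by linarith), fract_shift _ _ (by linarith) (by linarith),
    psiF_phiF h0 h1]
  have := Int.floor_add_fract x
  linarith

noncomputable def AU : CircleDeg1Liftˣ :=
  ⟨Slift, Silift, CircleDeg1Lift.ext fun x => Sfun_Sifun x, CircleDeg1Lift.ext fun x => Sifun_Sfun x⟩

noncomputable def BU : CircleDeg1Liftˣ := (Tr (1/4))⁻¹ * AU * Tr (1/4)

lemma Slift_eval {t : ℝ} (h0 : 0 ≤ t) (h1 : t < 1) : Slift t = phiF t := by
  show Sfun t = phiF t
  unfold Sfun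
  rw [Int.fract_eq_self.mpr ⟨h0, h1⟩, Int.floor_eq_zero_iff.mpr ⟨h0, h1⟩]
  norm_num

lemma Silift_eval {t : ℝ} (h0 : 0 ≤ t - 1/12) (h1 : t - 1/12 < 1) : Silift t = psiF (t - 1/12) := by
  show Sifun t = psiF (t - 1/12)
  unfold Sifun
  rw [Int.fract_eq_self.mpr ⟨h0, h1⟩, Int.floor_eq_zero_iff.mpr ⟨h0, h1⟩]
  norm_num

lemma AUinv_val : ((AU⁻¹ : CircleDeg1Liftˣ) : CircleDeg1Lift) = Silift := rfl
lemma AU_val : ((AU : CircleDeg1Liftˣ) : CircleDeg1Lift) = Slift := rfl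

lemma P_at_zero :
    ((AU * BU * AU⁻¹ * BU⁻¹ : CircleDeg1Liftˣ) : CircleDeg1Lift) 0 = 0 + (1:ℤ) := by
  have h1 : ((BU⁻¹ : CircleDeg1Liftˣ) : CircleDeg1Lift) 0 = 1/4 := by
    show ((((Tr (1/4))⁻¹ * AU * Tr (1/4))⁻¹ : CircleDeg1Liftˣ) : CircleDeg1Lift) 0 = 1/4
    rw [show ((Tr (1/4))⁻¹ * AU * Tr (1/4))⁻¹ = (Tr (1/4))⁻¹ * AU⁻¹ * Tr (1/4) by group]
    simp only [Units.val_mul, CircleDeg1Lift.mul_apply, AUinv_val]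
    rw [CircleDeg1Lift.translate_apply]
    rw [Silift_eval (by norm_num) (by norm_num)]
    rw [CircleDeg1Lift.translate_inv_apply]
    norm_num
    unfold psiF
    norm_num
  have h2 : ((AU⁻¹ : CircleDeg1Liftˣ) : CircleDeg1Lift) (1/4) = 1/2 := by
    rw [AUinv_val, Silift_eval (by norm_num) (by norm_num),
      show (1:ℝ)/4 - 1/12 = 1/6 by norm_num]
    unfold psiF; norm_num
  have h3 : ((BU : CircleDeg1Liftˣ) : CircleDeg1Lift) (1/2) = 3/4 := by
    show (((Tr (1/4))⁻¹ * AU * Tr (1/4) : CircleDeg1Liftˣ) : CircleDeg1Lift) (1/2) = 3/4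
    simp only [Units.val_mul, CircleDeg1Lift.mul_apply, AU_val]
    rw [CircleDeg1Lift.translate_apply, show (1:ℝ)/4 + 1/2 = 3/4 by norm_num,
      Slift_eval (by norm_num) (by norm_num)]
    rw [CircleDeg1Lift.translate_inv_apply]
    unfold phiF; norm_num
  have h4 : ((AU : CircleDeg1Liftˣ) : CircleDeg1Lift) (3/4) = 1 := by
    rw [AU_val, Slift_eval (by norm_num) (by norm_num)]
    unfold phiF; norm_num
  simp only [Units.val_mul, CircleDeg1Lift.mul_apply]
  rw [h1, h2, h3, h4]
  norm_num

lemma trN_P : trN ((AU * BU * AU⁻¹ * BU⁻¹ : CircleDeg1Liftˣ) : CircleDeg1Lift) = 1 := by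
  have := CircleDeg1Lift.translationNumber_of_eq_add_int _ P_at_zero
  exact_mod_cast this

end PLmaps

section CommLists

variable {Γ : Type*} [Group Γ] {Δ : Type*} [Group Δ]

def CommList (m : ℕ) (x : Γ) : Prop :=
  ∃ l : List Γ, l.length = m ∧ (∀ w ∈ l, ∃ u v : Γ, w = u*v*u⁻¹*v⁻¹) ∧ l.prod = x

lemma commList_scheme (k : ℕ) (p q : ℕ → Γ) (α c : Γ) :
    CommList (k+1) ((List.ofFn fun i : Fin k => p i * q i).prod * (α*c*α⁻¹) *
      ((List.ofFn fun i : Fin k => (p i)⁻¹ * (q i)⁻¹).prod * c⁻¹)) := by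
  induction k generalizing p q with
  | zero =>
    refine ⟨[α*c*α⁻¹*c⁻¹], rfl, ?_, by simp⟩
    rintro w hw
    simp only [List.mem_singleton] at hw
    exact ⟨α, c, hw⟩
  | succ k ih =>
    obtain ⟨l, hlen, hcomm, hprod⟩ := ih (fun i => p (i+1)) (fun i => q (i+1))
    set X' := (List.ofFn fun i : Fin k => p (i+1) * q (i+1)).prod with hX
    set Y' := (List.ofFn fun i : Fin k => (p (i+1))⁻¹ * (q (i+1))⁻¹).prod with hY
    set u := p 0 * q 0 with hu
    set v := X' * (α*c*α⁻¹) * q 0 with hv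
    refine ⟨(u*v*u⁻¹*v⁻¹) :: l, by simp [hlen], ?_, ?_⟩
    · rintro w hw
      rcases List.mem_cons.mp hw with h | h
      · exact ⟨u, v, h⟩
      · exact hcomm w h
    · rw [List.prod_cons, hprod]
      have e1 : (List.ofFn fun i : Fin (k+1) => p i * q i) =
          (p 0 * q 0) :: List.ofFn fun i : Fin k => p (i+1) * q (i+1) := by
        rw [List.ofFn_succ]; simp [Fin.val_succ]
      have e2 : (List.ofFn fun i : Fin (k+1) => (p i)⁻¹ * (q i)⁻¹) =
          ((p 0)⁻¹ * (q 0)⁻¹) :: List.ofFn fun i : Fin k => (p (i+1))⁻¹ * (q (i+1))⁻¹ := by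
        rw [List.ofFn_succ]; simp [Fin.val_succ]
      rw [e1, e2, List.prod_cons, List.prod_cons, ← hX, ← hY, hu, hv]
      group

lemma commList_mul {m₁ m₂ : ℕ} {x y : Γ} (h₁ : CommList m₁ x) (h₂ : CommList m₂ y) :
    CommList (m₁ + m₂) (x * y) := by
  obtain ⟨l₁, hl₁, hc₁, hp₁⟩ := h₁
  obtain ⟨l₂, hl₂, hc₂, hp₂⟩ := h₂
  exact ⟨l₁ ++ l₂, by simp [hl₁, hl₂], by
    intro w hw; rcases List.mem_append.mp hw with h | h
    exacts [hc₁ w h, hc₂ w h], by rw [List.prod_append, hp₁, hp₂]⟩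

lemma commList_one_one : CommList 1 (1 : Γ) :=
  ⟨[1*1*1⁻¹*1⁻¹], rfl, by rintro w hw; simp only [List.mem_singleton] at hw; exact ⟨1,1,hw⟩,
    by simp⟩

lemma commList_map (ψ : Γ →* Δ) {m : ℕ} {x : Γ} (h : CommList m x) : CommList m (ψ x) := by
  obtain ⟨l, hlen, hcomm, hprod⟩ := h
  refine ⟨l.map ψ, by simp [hlen], ?_, by rw [← map_list_prod, hprod]⟩
  intro w hw
  obtain ⟨w', hw', rfl⟩ := List.mem_map.mp hw
  obtain ⟨u, v, rfl⟩ := hcomm w' hw'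
  exact ⟨ψ u, ψ v, by simp⟩

lemma isCommProd_top_iff {m : ℕ} {x : Γ} :
    IsCommProd (⊤ : Subgroup Γ) m x ↔ CommList m x := by
  constructor
  · rintro ⟨c, hc, hp⟩
    refine ⟨List.ofFn c, by simp, ?_, hp⟩
    intro w hw
    obtain ⟨i, rfl⟩ := List.mem_ofFn.mp hw
    obtain ⟨g, h, _, hw⟩ := hc i
    exact ⟨g, h, hw⟩
  · rintro ⟨l, hlen, hcomm, hprod⟩
    subst hlen
    refine ⟨l.get, fun i => ?_, by rw [List.ofFn_get]; exact hprod⟩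
    obtain ⟨u, v, huv⟩ := hcomm (l.get i) (List.get_mem l i)
    exact ⟨u, v, Subgroup.mem_top v, huv⟩

lemma isCommProd_list {N : Subgroup Γ} {m : ℕ} {x : Γ}
    (l : List Γ) (hlen : l.length = m)
    (hcomm : ∀ w ∈ l, ∃ g h : Γ, h ∈ N ∧ w = g*h*g⁻¹*h⁻¹) (hprod : l.prod = x) :
    IsCommProd N m x := by
  subst hlen
  refine ⟨l.get, fun i => hcomm (l.get i) (List.get_mem l i), by rw [List.ofFn_get]; exact hprod⟩

end CommLists

namespace SwapEx

abbrev H := FreeGroup Bool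
noncomputable def a : H := FreeGroup.of false
noncomputable def b : H := FreeGroup.of true
noncomputable def z : H := a*b*a⁻¹*b⁻¹

lemma z_eq_comm : z = ⁅FreeGroup.of false, FreeGroup.of true⁆ := by
  rw [commutatorElement_def]; rfl

lemma keyL1 (M : ℤ) : a^(-(2*M)) * (a^(2*M+1) * (b * a⁻¹ * b⁻¹) * a^(-(2*M+2)))
    = z * a^(-(2*(M+1))) := by
  unfold z; group

lemma L1 (m : ℕ) :
    (List.ofFn fun i : Fin m => a^(2*(i:ℤ)+1) * (b * a⁻¹ * b⁻¹) * a^(-(2*(i:ℤ)+2))).prod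
      = z^m * a^(-(2*(m:ℤ))) := by
  induction m with
  | zero => simp
  | succ m ih =>
    rw [List.ofFn_succ', List.concat_eq_append, List.prod_append]
    simp only [Fin.coe_castSucc, Fin.val_last, List.prod_cons, List.prod_nil, mul_one]
    rw [ih]
    push_cast
    rw [mul_assoc, keyL1, ← mul_assoc, ← pow_succ]

lemma keyL2 (n M : ℤ) : a^(2*M+1-n) * (a^(n-2*M-1) * (b⁻¹*a*b) * a^(2*M+2-n))
    = (b⁻¹*a*b*a⁻¹) * a^(2*(M+1)+1-n) := by
  group

lemma L2 (n : ℤ) (m : ℕ) :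
    (List.ofFn fun i : Fin m => a^(n-2*(i:ℤ)-1) * (b⁻¹*a*b) * a^(2*(i:ℤ)+2-n)).prod
      = a^(n-1) * (b⁻¹*a*b*a⁻¹)^m * a^(2*(m:ℤ)+1-n) := by
  induction m with
  | zero => simp; group
  | succ m ih =>
    rw [List.ofFn_succ', List.concat_eq_append, List.prod_append]
    simp only [Fin.coe_castSucc, Fin.val_last, List.prod_cons, List.prod_nil, mul_one]
    rw [ih]
    push_cast
    rw [mul_assoc (a^(n-1) * (b⁻¹*a*b*a⁻¹)^m), keyL2, pow_succ]
    simp only [mul_assoc]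

lemma L3 (k : ℕ) : z^k * (a*b*a⁻¹) * (b⁻¹*a*b*a⁻¹)^k * b⁻¹ = z^(2*k+1) := by
  induction k with
  | zero => simp [z]
  | succ k ih =>
    have key : (a*b*a⁻¹) * (b⁻¹*a*b*a⁻¹) = z * (a*b*a⁻¹) := by unfold z; group
    have ih' : z^k * ((a*b*a⁻¹) * ((b⁻¹*a*b*a⁻¹)^k * b⁻¹)) = z^(2*k+1) := by
      rw [← ih]; simp only [mul_assoc]
    calc z^(k+1) * (a*b*a⁻¹) * (b⁻¹*a*b*a⁻¹)^(k+1) * b⁻¹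
        = z^(k+1) * (((a*b*a⁻¹) * (b⁻¹*a*b*a⁻¹)) * ((b⁻¹*a*b*a⁻¹)^k * b⁻¹)) := by
          rw [pow_succ' (b⁻¹*a*b*a⁻¹) k]; simp only [mul_assoc]
      _ = (z^(k+1) * z) * ((a*b*a⁻¹) * ((b⁻¹*a*b*a⁻¹)^k * b⁻¹)) := by
          rw [key]; simp only [mul_assoc]
      _ = z^2 * (z^k * ((a*b*a⁻¹) * ((b⁻¹*a*b*a⁻¹)^k * b⁻¹))) := by
          rw [← pow_succ, show k+1+1 = 2+k from by ring, pow_add]; simp only [mul_assoc]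
      _ = z^2 * z^(2*k+1) := by rw [ih']
      _ = z^(2*(k+1)+1) := by rw [← pow_add, show 2+(2*k+1) = 2*(k+1)+1 from by ring]

lemma commList_zpow (k : ℕ) : CommList (k+1) (z^(2*k+1)) := by
  have base := commList_scheme k
    (fun i => a^(2*(i:ℤ)+1) * b * a^(2*(i:ℤ)+1-(2*(k:ℤ)+1)))
    (fun i => (a^(2*(i:ℤ)+2) * b * a^(2*(i:ℤ)+2-(2*(k:ℤ)+1)))⁻¹)
    (a^(2*(k:ℤ)+1)) b
  have e1 : (List.ofFn fun i : Fin k =>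
      (a^(2*(i:ℤ)+1) * b * a^(2*(i:ℤ)+1-(2*(k:ℤ)+1))) *
      (a^(2*(i:ℤ)+2) * b * a^(2*(i:ℤ)+2-(2*(k:ℤ)+1)))⁻¹)
      = List.ofFn fun i : Fin k => a^(2*(i:ℤ)+1) * (b * a⁻¹ * b⁻¹) * a^(-(2*(i:ℤ)+2)) := by
    congr 1; funext i; group
  have e2 : (List.ofFn fun i : Fin k =>
      (a^(2*(i:ℤ)+1) * b * a^(2*(i:ℤ)+1-(2*(k:ℤ)+1)))⁻¹ *
      ((a^(2*(i:ℤ)+2) * b * a^(2*(i:ℤ)+2-(2*(k:ℤ)+1)))⁻¹)⁻¹)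
      = List.ofFn fun i : Fin k =>
          a^((2*(k:ℤ)+1)-2*(i:ℤ)-1) * (b⁻¹*a*b) * a^(2*(i:ℤ)+2-(2*(k:ℤ)+1)) := by
    congr 1; funext i; group
  rw [e1, e2, L1, L2] at base
  convert base using 1
  rw [← L3 k]
  generalize (b⁻¹*a*b*a⁻¹)^k = w
  generalize z^k = zk
  group

lemma commList_z : CommList 1 z :=
  ⟨[a*b*a⁻¹*b⁻¹], rfl, by rintro w hw; simp only [List.mem_singleton] at hw; exact ⟨a,b,hw⟩,
    by simp [z]⟩

lemma commList_z_pow (n : ℕ) : CommList (n/2+1) (z^n) := by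
  rcases Nat.even_or_odd n with ⟨j, hj⟩ | ⟨j, hj⟩
  · rcases Nat.eq_zero_or_pos j with rfl | hj0
    · subst hj; simpa using (commList_one_one : CommList 1 (1 : H))
    · obtain ⟨i, rfl⟩ : ∃ i, j = i + 1 := ⟨j - 1, (Nat.succ_pred_eq_of_pos hj0).symm⟩
      subst hj
      have h1 : CommList (i+1) (z^(2*i+1)) := commList_zpow i
      have := commList_mul h1 commList_z
      have he : z^(2*i+1) * z = z^(i+1+(i+1)) := by
        rw [← pow_succ]; congr 1; ring
      rw [he] at this
      have harith : (i+1+(i+1))/2 + 1 = i + 1 + 1 := by omega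
      rw [harith]
      exact this
  · subst hj
    have := commList_zpow j
    have harith : (2*j+1)/2 + 1 = j + 1 := by omega
    rw [harith]
    exact this

/-- The circle representation. -/
noncomputable def rho : H →* CircleDeg1Liftˣ :=
  FreeGroup.lift (fun t => if t then BU else AU)

lemma rho_z : rho z = AU * BU * AU⁻¹ * BU⁻¹ := by
  unfold z a b rho
  simp

lemma lower_bound (n m : ℕ) (h : CommList m (z^n)) : (n:ℝ) ≤ 2*m := by
  have h2 : CommList m (rho z ^ n) := by
    have := commList_map rho h
    rwa [map_pow] at this
  obtain ⟨l, hlen, hcomm, hprod⟩ := h2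
  have hτ := trN_prod_le (l) (fun w hw => hcomm w hw)
  rw [hprod, hlen] at hτ
  have hval : ((rho z ^ n : CircleDeg1Liftˣ) : CircleDeg1Lift)
      = ((rho z : CircleDeg1Liftˣ) : CircleDeg1Lift)^n := by push_cast; rfl
  rw [hval] at hτ
  have := CircleDeg1Lift.translationNumber_pow ((rho z : CircleDeg1Liftˣ) : CircleDeg1Lift) n
  unfold trN at hτ
  rw [this] at hτ
  have hP := trN_P
  unfold trN at hP
  rw [rho_z, hP] at hτ
  simpa using hτ

end SwapEx

section Limsup

lemma limsup_eq_half {s : ℕ → ℝ} (h1 : ∀ n, 1 ≤ n → 1/2 ≤ s n)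
    (h2 : ∀ n, 1 ≤ n → s n ≤ 1/2 + 1/n) :
    Filter.limsup s Filter.atTop = 1/2 := by
  have ht : Filter.Tendsto s Filter.atTop (𝓝 (1/2)) := by
    have hub : Filter.Tendsto (fun n : ℕ => 1/2 + 1/(n:ℝ)) Filter.atTop (𝓝 (1/2)) := by
      have := (tendsto_const_nhds :
          Filter.Tendsto (fun _ : ℕ => (1/2:ℝ)) Filter.atTop (𝓝 (1/2))).add
        tendsto_one_div_atTop_nhds_zero_nat
      simpa using this
    refine tendsto_of_tendsto_of_tendsto_of_le_of_le' tendsto_const_nhds hub ?_ ?_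
    · exact (Filter.eventually_ge_atTop 1).mono (fun n hn => h1 n hn)
    · exact (Filter.eventually_ge_atTop 1).mono (fun n hn => h2 n hn)
  exact ht.limsup_eq

lemma limsup_eq_zero {s : ℕ → ℝ} (h1 : ∀ n, 0 ≤ s n)
    (h2 : ∀ n, 1 ≤ n → s n ≤ 2/n) :
    Filter.limsup s Filter.atTop = 0 := by
  have ht : Filter.Tendsto s Filter.atTop (𝓝 0) := by
    refine tendsto_of_tendsto_of_tendsto_of_le_of_le' tendsto_const_nhds
      (tendsto_const_div_atTop_nhds_zero_nat 2) ?_ ?_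
    · exact Filter.Eventually.of_forall h1
    · exact (Filter.eventually_ge_atTop 1).mono (fun n hn => h2 n hn)
  exact ht.limsup_eq

end Limsup

/-- For `G = F₂ ⋊ ℤ/2ℤ` (swap action), `N = F₂` and `x = [a,b]`: every `G`-invariant
homogeneous quasimorphism on `N` vanishes at `x`, hence `scl_{G,N}(x) = 0`, while
`scl_N(x) = 1/2`; consequently `scl_{G,N}` and `scl_N` are not equivalent on `[N,N]`. -/
theorem swap_example (N : Subgroup G) (hN : N.Normal)
    (τ : G) (hτ : τ * τ = 1) (e : FreeGroup Bool ≃* N)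
    (ha : τ * (e (FreeGroup.of false) : G) * τ⁻¹ = (e (FreeGroup.of true) : G))
    (hb : τ * (e (FreeGroup.of true) : G) * τ⁻¹ = (e (FreeGroup.of false) : G)) :
    (∀ (f : N → ℝ) (D : ℝ), (∀ x y : N, |f (x * y) - f x - f y| ≤ D) →
        (∀ (x : N) (n : ℤ), f (x ^ n) = n * f x) →
        (∀ (g : G) (x : N), f ⟨g * x * g⁻¹, hN.conj_mem x x.2 g⟩ = f x) →
        f (e ⁅FreeGroup.of false, FreeGroup.of true⁆) = 0) ∧
      sclGN N ((e ⁅FreeGroup.of false, FreeGroup.of true⁆ : N) : G) = 0 ∧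
      sclGN (⊤ : Subgroup N) (e ⁅FreeGroup.of false, FreeGroup.of true⁆) = 1 / 2 ∧
      ¬∃ C : ℝ, 0 < C ∧ ∀ y : N, (y : G) ∈ ⁅N, N⁆ →
        C⁻¹ * sclGN (⊤ : Subgroup N) y ≤ sclGN N (y : G) ∧
          sclGN N (y : G) ≤ C * sclGN (⊤ : Subgroup N) y := by
  classical
  set xN : N := e ⁅FreeGroup.of false, FreeGroup.of true⁆ with hxN
  set x : G := (xN : G) with hx
  -- τ is an involution
  have hτinv : τ⁻¹ = τ := inv_eq_of_mul_eq_one_left hτ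
  -- conjugation by τ inverts x
  have hxcomm : x = (e (FreeGroup.of false) : G) * (e (FreeGroup.of true) : G) *
      (e (FreeGroup.of false) : G)⁻¹ * (e (FreeGroup.of true) : G)⁻¹ := by
    rw [hx, hxN, map_commutatorElement]
    rw [commutatorElement_def]
    push_cast
    rfl
  have hconj : τ * x * τ⁻¹ = x⁻¹ := by
    have expand : ∀ u v : G, τ * (u*v*u⁻¹*v⁻¹) * τ⁻¹
        = (τ*u*τ⁻¹)*(τ*v*τ⁻¹)*(τ*u*τ⁻¹)⁻¹*(τ*v*τ⁻¹)⁻¹ := by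
      intro u v; group
    rw [hxcomm, expand, ha, hb]
    group
  -- Part 3 : scl over F₂ is 1/2
  have part3 : sclGN (⊤ : Subgroup N) xN = 1 / 2 := by
    have upper : ∀ n : ℕ, IsCommProd (⊤ : Subgroup N) (n/2+1) (xN ^ n) := by
      intro n
      have h0 : CommList (n/2+1) (SwapEx.z ^ n) := SwapEx.commList_z_pow n
      have h1 : CommList (n/2+1) (xN ^ n) := by
        have := commList_map e.toMonoidHom h0
        rwa [map_pow, show e.toMonoidHom SwapEx.z = xN by
          rw [hxN, SwapEx.z_eq_comm]; rfl] at this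
      exact isCommProd_top_iff.mpr h1
    have lower : ∀ n m : ℕ, IsCommProd (⊤ : Subgroup N) m (xN ^ n) → (n:ℝ) ≤ 2*m := by
      intro n m h
      have h1 : CommList m (xN ^ n) := isCommProd_top_iff.mp h
      have h2 : CommList m (SwapEx.z ^ n) := by
        have := commList_map e.symm.toMonoidHom h1
        rwa [map_pow, show e.symm.toMonoidHom xN = SwapEx.z by
          rw [hxN, SwapEx.z_eq_comm]; exact e.symm_apply_apply _] at this
      exact SwapEx.lower_bound n m h2
    rw [sclGN]
    apply limsup_eq_half
    · intro n hn
      have hne : {m | IsCommProd (⊤ : Subgroup N) m (xN ^ n)}.Nonempty := ⟨_, upper n⟩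
      have hmem := Nat.sInf_mem hne
      have := lower n _ hmem
      rw [clGN]
      have hn' : (0:ℝ) < n := by exact_mod_cast hn
      rw [le_div_iff₀ hn']
      linarith
    · intro n hn
      have hle : clGN (⊤ : Subgroup N) (xN ^ n) ≤ n/2+1 := Nat.sInf_le (upper n)
      have hn' : (0:ℝ) < n := by exact_mod_cast hn
      rw [div_le_iff₀ hn']
      have hc : ((clGN (⊤ : Subgroup N) (xN ^ n) : ℕ) : ℝ) ≤ ((n/2 : ℕ) : ℝ) + 1 := by
        exact_mod_cast hle
      have hdiv : ((n/2 : ℕ) : ℝ) ≤ (n:ℝ)/2 := Nat.cast_div_le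
      have hexp : (1/2 + 1/(n:ℝ)) * n = (n:ℝ)/2 + 1 := by field_simp
      rw [hexp]
      linarith
  -- Part 2 : relative scl vanishes
  have part2 : sclGN N x = 0 := by
    have hxmem : x ∈ N := by rw [hx]; exact xN.2
    have hbound : ∀ n : ℕ, clGN N (x ^ n) ≤ 2 := by
      intro n
      have heven : ∀ j : ℕ, IsCommProd N 1 (x ^ (2*j)) := by
        intro j
        refine isCommProd_list [τ * ((xN^j : N) : G)⁻¹ * τ⁻¹ * (((xN^j : N) : G)⁻¹)⁻¹] rfl ?_ ?_
        · rintro w hw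
          simp only [List.mem_singleton] at hw
          exact ⟨τ, ((xN^j : N) : G)⁻¹, N.inv_mem (xN^j).2, hw⟩
        · have hxj : ((xN^j : N) : G) = x^j := by rw [hx]; push_cast; rfl
          simp only [List.prod_cons, List.prod_nil, mul_one, hxj, inv_inv]
          have hcj : τ * (x^j)⁻¹ * τ⁻¹ = x^j := by
            have : τ * x^j * τ⁻¹ = (τ * x * τ⁻¹)^j := by rw [conj_pow]
            rw [hconj] at this
            have h2 : τ * (x^j)⁻¹ * τ⁻¹ = (τ * x^j * τ⁻¹)⁻¹ := by group
            rw [h2, this]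
            simp [inv_pow]
          rw [hcj, ← pow_add]
          congr 1
          ring
      rcases Nat.even_or_odd n with ⟨j, hj⟩ | ⟨j, hj⟩
      · have : IsCommProd N 1 (x ^ n) := by
          rw [hj, show j + j = 2*j from by ring]; exact heven j
        calc clGN N (x ^ n) ≤ 1 := Nat.sInf_le this
          _ ≤ 2 := by norm_num
      · have hx1 : IsCommProd N 1 x := by
          refine isCommProd_list [(e (FreeGroup.of false) : G) * (e (FreeGroup.of true) : G) *
            (e (FreeGroup.of false) : G)⁻¹ * (e (FreeGroup.of true) : G)⁻¹] rfl ?_ ?_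
          · rintro w hw
            simp only [List.mem_singleton] at hw
            exact ⟨(e (FreeGroup.of false) : G), (e (FreeGroup.of true) : G),
              (e (FreeGroup.of true)).2, hw⟩
          · simp only [List.prod_cons, List.prod_nil, mul_one]
            exact hxcomm.symm
        have : IsCommProd N 2 (x ^ n) := by
          have h2 := heven j
          obtain ⟨l₁, hlen₁, hc₁, hp₁⟩ : ∃ l : List G, l.length = 1 ∧
              (∀ w ∈ l, ∃ g h : G, h ∈ N ∧ w = g*h*g⁻¹*h⁻¹) ∧ l.prod = x ^ (2*j) := by
            obtain ⟨c, hc, hp⟩ := h2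
            exact ⟨List.ofFn c, by simp, by
              intro w hw
              obtain ⟨i, rfl⟩ := List.mem_ofFn.mp hw
              exact hc i, hp⟩
          obtain ⟨l₂, hlen₂, hc₂, hp₂⟩ : ∃ l : List G, l.length = 1 ∧
              (∀ w ∈ l, ∃ g h : G, h ∈ N ∧ w = g*h*g⁻¹*h⁻¹) ∧ l.prod = x := by
            obtain ⟨c, hc, hp⟩ := hx1
            exact ⟨List.ofFn c, by simp, by
              intro w hw
              obtain ⟨i, rfl⟩ := List.mem_ofFn.mp hw
              exact hc i, hp⟩
          refine isCommProd_list (l₁ ++ l₂) (by simp [hlen₁, hlen₂]) ?_ ?_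
          · intro w hw
            rcases List.mem_append.mp hw with h | h
            exacts [hc₁ w h, hc₂ w h]
          · rw [List.prod_append, hp₁, hp₂, ← pow_succ, hj]
        exact Nat.sInf_le this
    rw [sclGN]
    apply limsup_eq_zero
    · intro n
      positivity
    · intro n hn
      have hn' : (0:ℝ) < n := by exact_mod_cast hn
      have h2 : ((clGN N (x ^ n) : ℕ) : ℝ) ≤ 2 := by exact_mod_cast hbound n
      gcongr
  refine ⟨?_, part2, part3, ?_⟩
  · -- Part 1 : invariant homogeneous quasimorphisms vanish on x
    intro f D _hf1 hf2 hf3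
    have hmm : (⟨τ * ↑xN * τ⁻¹, hN.conj_mem xN xN.2 τ⟩ : N) = xN⁻¹ := by
      apply Subtype.ext
      show τ * ↑xN * τ⁻¹ = ((xN⁻¹ : N) : G)
      have h1 : ((xN⁻¹ : N) : G) = x⁻¹ := by simp [hx]
      rw [h1, ← hconj, hx]
    have h5 := hf3 τ xN
    rw [hmm] at h5
    have h6 := hf2 xN (-1)
    rw [zpow_neg_one] at h6
    have : f xN = 0 := by
      rw [h5] at h6
      have : (((-1 : ℤ)) : ℝ) * f xN = - f xN := by push_cast; ring
      rw [this] at h6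
      linarith
    exact this
  · -- Part 4 : no equivalence
    rintro ⟨C, hC, hCy⟩
    have hymem : (xN : G) ∈ ⁅N, N⁆ := by
      have hx2 : (xN : G) = ⁅(e (FreeGroup.of false) : G), (e (FreeGroup.of true) : G)⁆ := by
        rw [commutatorElement_def, ← hx]
        exact hxcomm
      rw [hx2]
      exact Subgroup.commutator_mem_commutator (e (FreeGroup.of false)).2 (e (FreeGroup.of true)).2
    obtain ⟨h1, _h2⟩ := hCy xN hymem
    rw [part3] at h1
    rw [show ((xN : N) : G) = x from hx.symm, part2] at h1
    have hCpos : 0 < C⁻¹ := inv_pos.mpr hC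
    nlinarith
end

section
/- Let A and B be groups, G = A ∗ B, N = Ker(A ∗ B → A × B). Suppose z ∈ A∖{e} satisfies z² = e, and suppose there exists h ∈ N with zhz = zhz⁻¹ and h not commuting with zhz. Set x = h·(zhz)·h⁻¹·(zh⁻¹z) ∈ [N,N]. Then zxz = x⁻¹, and consequently for every n ∈ ℤ, x^{2n} = [z, x^{-n}]; in particular cl_{G,N}(x^{2n}) ≤ 1 for all n ≥ 1 and scl_{G,N}(x) = 0. -/
open Filter Topology
open scoped commutatorElement

section

variable {G : Type*} [Group G]

lemma isCommProd_two {N : Subgroup G} {g₁ h₁ g₂ h₂ x : G} (m₁ : h₁ ∈ N) (m₂ : h₂ ∈ N)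
    (hx : x = ⁅g₁, h₁⁆ * ⁅g₂, h₂⁆) : IsCommProd N 2 x := by
  refine ⟨![⁅g₁, h₁⁆, ⁅g₂, h₂⁆], ?_, ?_⟩
  · intro i
    fin_cases i
    · exact ⟨g₁, h₁, m₁, commutatorElement_def _ _⟩
    · exact ⟨g₂, h₂, m₂, commutatorElement_def _ _⟩
  · simp [hx]

lemma isCommProd_one {N : Subgroup G} {g₁ h₁ x : G} (m₁ : h₁ ∈ N)
    (hx : x = ⁅g₁, h₁⁆) : IsCommProd N 1 x := by
  refine ⟨![⁅g₁, h₁⁆], fun i => ⟨g₁, h₁, m₁, ?_⟩, by simp [hx]⟩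
  fin_cases i
  exact commutatorElement_def _ _

end

variable (A B : Type*) [Group A] [Group B]

/-- In `G = A ∗ B` with `N = Ker(A ∗ B → A × B)`: if `z ∈ A` is an involution and
`h ∈ N` does not commute with `zhz`, then `x = h(zhz)h⁻¹(zh⁻¹z)` lies in `[N,N]`,
satisfies `zxz = x⁻¹` and `x^{2n} = [z, x^{-n}]`; hence `cl_{G,N}(x^{2n}) ≤ 1` for
`n ≥ 1` and `scl_{G,N}(x) = 0`. -/
theorem involution_scl_zero (z : A) (hz : z ≠ 1) (hz2 : z * z = 1)
    (h : Monoid.Coprod A B) (hh : h ∈ (canonicalSurj A B).ker)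
    (hcomm : h * (Monoid.Coprod.inl z * h * Monoid.Coprod.inl z) ≠
      (Monoid.Coprod.inl z * h * Monoid.Coprod.inl z) * h) :
    let ζ : Monoid.Coprod A B := Monoid.Coprod.inl z
    let x : Monoid.Coprod A B := h * (ζ * h * ζ) * h⁻¹ * (ζ * h⁻¹ * ζ)
    x ∈ ⁅((canonicalSurj A B).ker : Subgroup (Monoid.Coprod A B)),
        (canonicalSurj A B).ker⁆ ∧
      ζ * x * ζ = x⁻¹ ∧
      (∀ n : ℤ, x ^ (2 * n) = ⁅ζ, x ^ (-n)⁆) ∧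
      (∀ n : ℕ, 1 ≤ n → clGN (canonicalSurj A B).ker (x ^ (2 * n)) ≤ 1) ∧
      Tendsto (fun n : ℕ => (clGN (canonicalSurj A B).ker (x ^ n) : ℝ) / n)
        atTop (𝓝 0) := by
  intro ζ x
  set N := (canonicalSurj A B).ker with hN
  have hzz : ζ * ζ = 1 := by
    show Monoid.Coprod.inl z * Monoid.Coprod.inl z = 1
    rw [← map_mul, hz2, map_one]
  have hinv : ζ⁻¹ = ζ := inv_eq_of_mul_eq_one_right hzz
  have hcancel : ∀ g : Monoid.Coprod A B, ζ * (ζ * g) = g := fun g => by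
    rw [← mul_assoc, hzz, one_mul]
  have hk : ζ * h * ζ ∈ N := by
    have := (MonoidHom.normal_ker (canonicalSurj A B)).conj_mem h hh ζ
    rwa [hinv] at this
  have hkinv : (ζ * h * ζ)⁻¹ = ζ * h⁻¹ * ζ := by
    rw [mul_inv_rev, mul_inv_rev, hinv, mul_assoc]
  have hxcomm : x = ⁅h, ζ * h * ζ⁆ := by
    rw [commutatorElement_def, hkinv]
  have part1 : x ∈ ⁅N, N⁆ := hxcomm ▸ Subgroup.commutator_mem_commutator hh hk
  have part2 : ζ * x * ζ = x⁻¹ := by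
    show ζ * (h * (ζ * h * ζ) * h⁻¹ * (ζ * h⁻¹ * ζ)) * ζ
      = (h * (ζ * h * ζ) * h⁻¹ * (ζ * h⁻¹ * ζ))⁻¹
    simp only [mul_inv_rev, hinv, inv_inv, mul_assoc, hcancel]
    simp [← mul_assoc, hzz]
  have hconj : ζ * x * ζ⁻¹ = x⁻¹ := by rw [hinv]; exact part2
  have part3 : ∀ n : ℤ, x ^ (2 * n) = ⁅ζ, x ^ (-n)⁆ := by
    intro n
    have key : ζ * x ^ (-n) * ζ⁻¹ = x ^ n := by
      rw [← conj_zpow, hconj, inv_zpow, zpow_neg, inv_inv]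
    have h2 : (x ^ (-n))⁻¹ = x ^ n := by rw [zpow_neg, inv_inv]
    rw [commutatorElement_def, h2, key, ← zpow_add, two_mul]
  have hxN : x ∈ N :=
    hxcomm ▸ N.mul_mem (N.mul_mem (N.mul_mem hh hk) (N.inv_mem hh)) (N.inv_mem hk)
  have part4 : ∀ n : ℤ, IsCommProd N 1 (x ^ (2 * n)) :=
    fun n => isCommProd_one (N.zpow_mem hxN (-n)) (part3 n)
  have hcl2 : ∀ n : ℕ, clGN N (x ^ n) ≤ 2 := by
    intro n
    apply Nat.sInf_le
    rcases Nat.even_or_odd n with ⟨m, hm⟩ | ⟨m, hm⟩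
    · refine isCommProd_two (g₁ := ζ) (N.zpow_mem hxN (-(m : ℤ))) (N.one_mem)
        (h₂ := (1 : Monoid.Coprod A B)) (g₂ := 1) ?_
      have : x ^ n = x ^ ((2 * m : ℕ) : ℤ) := by
        rw [zpow_natCast]; congr 1; omega
      rw [this]
      push_cast
      rw [part3 m]
      simp
    · refine isCommProd_two (g₁ := ζ) (g₂ := h) (N.zpow_mem hxN (-(m : ℤ))) hk ?_
      have : x ^ n = x ^ ((2 * m : ℕ) : ℤ) * x := by
        rw [zpow_natCast, hm, pow_succ]
      rw [this]
      push_cast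
      rw [part3 m, ← hxcomm]
  refine ⟨part1, part2, part3, ?_, ?_⟩
  · intro n hn
    apply Nat.sInf_le
    have : x ^ (2 * n) = x ^ (2 * (n : ℤ)) := by
      rw [← zpow_natCast]; push_cast; ring_nf
    exact this ▸ part4 n
  · apply squeeze_zero (fun n => by positivity) (g := fun n : ℕ => 2 / (n : ℝ))
    · intro n
      rcases Nat.eq_zero_or_pos n with rfl | hn
      · simp
      · have h1 : (0 : ℝ) < n := by exact_mod_cast hn
        gcongr
        exact_mod_cast hcl2 n
    · exact tendsto_const_div_atTop_nhds_zero_nat 2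
end
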